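/- arXiv:1509.03084 — 14 statements merged into one kernel-verified Lean document; each statement's English description precedes it below -/
import Mathlib

section
/- Let N ≥ 2, let Ω ⊆ ℝ² be open with coordinates (x,t), and let a⁰,…,a^{N-1} : Ω → ℝ be differentiable, with the convention a^N ≡ 1. Define λ(q,x,t) = (1+q²)^{-N/2}·(q^N + Σ_{k=0}^{N-1} a^k(x,t) q^k). Then λ satisfies the Liouville-type equation ∂_t λ = a^{N-1}·q·∂_x λ + (1+q²)·(∂_q λ)·∂_x a^{N-1} for all q ∈ ℝ and all (x,t) ∈ Ω if and only if the functions a^k satisfy the hydrodynamic type system (A): ∂_t a⁰ = a¹·∂_x a^{N-1} and, for k = 1,…,N-1, ∂_t a^k = a^{N-1}·∂_x a^{k-1} + [(k+1)a^{k+1} − (N+1−k)a^{k-1}]·∂_x a^{N-1}. -/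
/-- Partial derivative in the `x` direction (first coordinate). -/
noncomputable def pdx (f : ℝ × ℝ → ℝ) (z : ℝ × ℝ) : ℝ := fderiv ℝ f z (1, 0)

/-- Partial derivative in the `t` direction (second coordinate). -/
noncomputable def pdt (f : ℝ × ℝ → ℝ) (z : ℝ × ℝ) : ℝ := fderiv ℝ f z (0, 1)

/-- System (A): the `N`-component hydrodynamic type system for the coefficients
`a⁰, …, a^{N-1}` of a degree-`N` polynomial first integral (with `a^N ≡ 1`). -/
def SystemA (N : ℕ) (Ω : Set (ℝ × ℝ)) (a : ℕ → ℝ × ℝ → ℝ) : Prop :=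
  ∀ z ∈ Ω,
    pdt (a 0) z = a 1 z * pdx (a (N - 1)) z ∧
    ∀ k, 1 ≤ k → k ≤ N - 1 →
      pdt (a k) z =
        a (N - 1) z * pdx (a (k - 1)) z +
          (((k : ℝ) + 1) * a (k + 1) z - ((N : ℝ) + 1 - (k : ℝ)) * a (k - 1) z) *
            pdx (a (N - 1)) z

/-- The Riemann surface function `λ(q, a) = (1+q²)^{-N/2}(q^N + Σ_{k<N} a^k q^k)`. -/
noncomputable def lam (N : ℕ) (a : ℕ → ℝ × ℝ → ℝ) (q : ℝ) (z : ℝ × ℝ) : ℝ :=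
  (1 + q ^ 2) ^ (-(N : ℝ) / 2) * (q ^ N + ∑ k ∈ Finset.range N, a k z * q ^ k)

open Polynomial in
lemma aux_coeff_sum (c : ℕ → ℝ) (n m : ℕ) :
    (∑ k ∈ Finset.range n, C (c k) * X ^ k).coeff m = if m < n then c m else 0 := by
  rw [finset_sum_coeff]
  simp only [coeff_C_mul, coeff_X_pow, mul_ite, mul_one, mul_zero]
  simp [Finset.sum_ite_eq, Finset.mem_range]

open Polynomial in
lemma aux_coeff_CXmul (c : ℝ) (p : Polynomial ℝ) (m : ℕ) :
    (C c * X * p).coeff m = c * (if 1 ≤ m then p.coeff (m-1) else 0) := by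
  rw [mul_assoc, coeff_C_mul, mul_comm X p, ← pow_one (X : Polynomial ℝ), coeff_mul_X_pow']

open Polynomial in
lemma aux_coeff_oneX2 (p : Polynomial ℝ) (m : ℕ) :
    ((1 + X^2) * p).coeff m = p.coeff m + if 2 ≤ m then p.coeff (m-2) else 0 := by
  rw [mul_comm, mul_add, mul_one, coeff_add, coeff_mul_X_pow']

open Polynomial in
lemma aux_master (M : ℕ) (a : ℕ → ℝ × ℝ → ℝ) (z : ℝ × ℝ)
    (hd : ∀ k < M + 2, DifferentiableAt ℝ (a k) z)
    (haN : a (M + 2) z = 1) :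
    (∀ q : ℝ,
        pdt (lam (M + 2) a q) z =
          a (M + 1) z * q * pdx (lam (M + 2) a q) z +
            (1 + q ^ 2) * deriv (fun q' => lam (M + 2) a q' z) q * pdx (a (M + 1)) z) ↔
      (pdt (a 0) z = a 1 z * pdx (a (M + 1)) z ∧
        ∀ k, 1 ≤ k → k ≤ M + 1 →
          pdt (a k) z =
            a (M + 1) z * pdx (a (k - 1)) z +
              (((k : ℝ) + 1) * a (k + 1) z - (((M + 2 : ℕ) : ℝ) + 1 - (k : ℝ)) * a (k - 1) z) *
                pdx (a (M + 1)) z) := by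
  set e : ℝ := -((M + 2 : ℕ) : ℝ) / 2 with he
  have he2 : 2 * e = -((M:ℝ)+2) := by rw [he]; push_cast; ring
  set pb : Polynomial ℝ := X ^ (M+2) + ∑ k ∈ Finset.range (M+2), C (a k z) * X ^ k with hpb
  set pu : Polynomial ℝ := ∑ k ∈ Finset.range (M+2), C (pdx (a k) z) * X ^ k with hpu
  set pv : Polynomial ℝ := ∑ k ∈ Finset.range (M+2), C (pdt (a k) z) * X ^ k with hpv
  set R : Polynomial ℝ := C (a (M+1) z) * X * pu +
    (C (-((M:ℝ)+2)) * X * pb + (1 + X ^ 2) * derivative pb) * C (pdx (a (M+1)) z) with hR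
  -- derivatives of lam
  have hfd : ∀ q : ℝ, HasFDerivAt (lam (M+2) a q)
      (((1 + q ^ 2) ^ e) • (∑ k ∈ Finset.range (M+2), q ^ k • fderiv ℝ (a k) z)) z := by
    intro q
    have h1 : HasFDerivAt (fun w => q ^ (M+2) + ∑ k ∈ Finset.range (M+2), a k w * q ^ k)
        (∑ k ∈ Finset.range (M+2), q ^ k • fderiv ℝ (a k) z) z := by
      refine HasFDerivAt.const_add _ ?_
      exact HasFDerivAt.fun_sum fun k hk =>
        ((hd k (Finset.mem_range.mp hk)).hasFDerivAt.mul_const (q ^ k))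
    exact h1.const_mul _
  have hpdt : ∀ q : ℝ, pdt (lam (M+2) a q) z = (1 + q ^ 2) ^ e * eval q pv := by
    intro q
    rw [pdt, (hfd q).fderiv]
    simp only [ContinuousLinearMap.smul_apply, ContinuousLinearMap.sum_apply,
      smul_eq_mul, hpv, eval_finset_sum, eval_mul, eval_C, eval_pow, eval_X]
    rw [Finset.mul_sum, Finset.mul_sum]
    exact Finset.sum_congr rfl fun k _ => by rw [pdt]; ring
  have hpdx : ∀ q : ℝ, pdx (lam (M+2) a q) z = (1 + q ^ 2) ^ e * eval q pu := by
    intro q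
    rw [pdx, (hfd q).fderiv]
    simp only [ContinuousLinearMap.smul_apply, ContinuousLinearMap.sum_apply,
      smul_eq_mul, hpu, eval_finset_sum, eval_mul, eval_C, eval_pow, eval_X]
    rw [Finset.mul_sum, Finset.mul_sum]
    exact Finset.sum_congr rfl fun k _ => by rw [pdx]; ring
  have hqder : ∀ q : ℝ, HasDerivAt (fun q' => lam (M+2) a q' z)
      ((2*q * e * (1 + q^2) ^ (e - 1)) * eval q pb
        + (1 + q^2) ^ e * eval q (derivative pb)) q := by
    intro q
    have hpos : (0:ℝ) < 1 + q ^ 2 := by positivity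
    have hlam_eq : (fun q' : ℝ => lam (M+2) a q' z)
        = fun q' => (1 + q'^2) ^ e * eval q' pb := by
      funext q'
      rw [lam, hpb]
      simp only [eval_add, eval_pow, eval_X, eval_finset_sum, eval_mul, eval_C]
      rw [he]
    rw [hlam_eq]
    have h1 : HasDerivAt (fun q' : ℝ => 1 + q' ^ 2) (2*q) q := by
      simpa using (hasDerivAt_pow 2 q).const_add 1
    have h2 := h1.rpow_const (p := e) (Or.inl hpos.ne')
    exact h2.mul (pb.hasDerivAt q)
  clear_value e
  -- pointwise equivalence with a polynomial identity
  have hkey : ∀ q : ℝ,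
      (pdt (lam (M+2) a q) z =
        a (M + 1) z * q * pdx (lam (M+2) a q) z +
          (1 + q ^ 2) * deriv (fun q' => lam (M+2) a q' z) q * pdx (a (M + 1)) z)
      ↔ eval q pv = eval q R := by
    intro q
    have hpos : (0:ℝ) < 1 + q ^ 2 := by positivity
    have hw : (1 + q ^ 2) ^ e ≠ 0 := (Real.rpow_pos_of_pos hpos e).ne'
    have hrpow : (1 + q^2) ^ (e-1) * (1 + q^2) = (1 + q^2) ^ e := by
      rw [← Real.rpow_add_one hpos.ne' (e-1), sub_add_cancel]
    have hevalR : eval q R = a (M+1) z * q * eval q pu +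
        ((-((M:ℝ)+2)) * q * eval q pb + (1+q^2) * eval q (derivative pb)) *
          pdx (a (M+1)) z := by
      rw [hR]
      simp only [eval_add, eval_mul, eval_C, eval_X, eval_pow, eval_one]
    have hRHSeq : a (M + 1) z * q * ((1 + q ^ 2) ^ e * eval q pu) +
        (1 + q ^ 2) * ((2*q * e * (1 + q^2) ^ (e - 1)) * eval q pb
          + (1 + q^2) ^ e * eval q (derivative pb)) * pdx (a (M + 1)) z
        = (1 + q ^ 2) ^ e * eval q R := by
      rw [hevalR]
      linear_combination (2*q*e*eval q pb*pdx (a (M+1)) z) * hrpow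
        + (q*eval q pb*pdx (a (M+1)) z*(1+q^2)^e) * he2
    rw [hpdt q, hpdx q, (hqder q).deriv, hRHSeq]
    exact mul_right_inj' hw
  -- coefficient computations
  have hpbc : ∀ m, m ≤ M + 2 → pb.coeff m = a m z := by
    intro m hm
    rw [hpb, coeff_add, coeff_X_pow, aux_coeff_sum]
    rcases eq_or_lt_of_le hm with h | h
    · subst h; simp [haN]
    · rw [if_neg (by omega), if_pos h, zero_add]
  have hpbc0 : ∀ m, M + 2 < m → pb.coeff m = 0 := by
    intro m hm
    rw [hpb, coeff_add, coeff_X_pow, aux_coeff_sum, if_neg (by omega), if_neg (by omega),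
      add_zero]
  have hpvco : ∀ m, pv.coeff m = if m < M+2 then pdt (a m) z else 0 := by
    intro m; rw [hpv, aux_coeff_sum]
  have hpuco : ∀ m, pu.coeff m = if m < M+2 then pdx (a m) z else 0 := by
    intro m; rw [hpu, aux_coeff_sum]
  have hRco : ∀ m, R.coeff m =
      a (M+1) z * (if 1 ≤ m then pu.coeff (m-1) else 0) +
        ((-((M:ℝ)+2)) * (if 1 ≤ m then pb.coeff (m-1) else 0) +
          ((derivative pb).coeff m + if 2 ≤ m then (derivative pb).coeff (m-2) else 0)) *
          pdx (a (M+1)) z := by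
    intro m
    rw [hR, coeff_add, aux_coeff_CXmul, coeff_mul_C, coeff_add, aux_coeff_CXmul,
      aux_coeff_oneX2]
  constructor
  · intro h
    have hco : ∀ m, pv.coeff m = R.coeff m := by
      have hPR : pv = R := Polynomial.funext fun r => (hkey r).mp (h r)
      exact fun m => by rw [hPR]
    constructor
    · have h0 := hco 0
      rw [hpvco, hRco] at h0
      simp only [if_pos (by omega : 0 < M + 2), if_neg (by omega : ¬ (1:ℕ) ≤ 0),
        if_neg (by omega : ¬ (2:ℕ) ≤ 0), coeff_derivative, hpbc 1 (by omega)] at h0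
      push_cast at h0
      linear_combination h0
    · intro k hk1 hk2
      obtain ⟨j, rfl⟩ : ∃ j, k = j + 1 := ⟨k - 1, by omega⟩
      have hm := hco (j+1)
      rw [hpvco, hRco, hpuco] at hm
      rw [if_pos (by omega : j + 1 < M + 2), if_pos (by omega : 1 ≤ j + 1),
        Nat.add_sub_cancel, if_pos (by omega : j < M + 2)] at hm
      simp only [Nat.add_sub_cancel]
      rcases j with _ | i
      · -- k = 1
        rw [if_neg (by omega : ¬ (2:ℕ) ≤ 0 + 1), coeff_derivative,
          hpbc 0 (by omega), hpbc (0+1+1) (by omega)] at hm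
        push_cast at hm ⊢
        linear_combination hm
      · -- k = i + 2
        rw [if_pos (by omega : 2 ≤ i + 1 + 1), show i + 1 + 1 - 2 = i from by omega,
          coeff_derivative, coeff_derivative, hpbc (i+1) (by omega),
          hpbc (i+1+1+1) (by omega)] at hm
        push_cast at hm ⊢
        linear_combination hm
  · intro h
    obtain ⟨h0, hks⟩ := h
    intro q
    apply (hkey q).mpr
    suffices hPR : pv = R by rw [hPR]
    apply Polynomial.ext
    intro m
    rw [hpvco, hRco]
    rcases m with _ | j
    · -- m = 0
      rw [if_pos (by omega : 0 < M + 2), if_neg (by omega : ¬ (1:ℕ) ≤ 0),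
        if_neg (by omega : ¬ (2:ℕ) ≤ 0), coeff_derivative, hpbc 1 (by omega)]
      push_cast
      linear_combination h0
    · rw [if_pos (by omega : 1 ≤ j + 1), Nat.add_sub_cancel, hpuco]
      rcases Nat.lt_or_ge (j+1) (M+2) with hj | hj
      · -- 1 ≤ j+1 ≤ M+1
        rw [if_pos hj, if_pos (by omega : j < M + 2)]
        have hk := hks (j+1) (by omega) (by omega)
        simp only [Nat.add_sub_cancel] at hk
        rcases j with _ | i
        · rw [if_neg (by omega : ¬ (2:ℕ) ≤ 0 + 1), coeff_derivative,
            hpbc 0 (by omega), hpbc (0+1+1) (by omega)]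
          push_cast at hk ⊢
          linear_combination hk
        · rw [if_pos (by omega : 2 ≤ i + 1 + 1), show i + 1 + 1 - 2 = i from by omega,
            coeff_derivative, coeff_derivative, hpbc (i+1) (by omega),
            hpbc (i+1+1+1) (by omega)]
          push_cast at hk ⊢
          linear_combination hk
      · -- j+1 ≥ M+2 : both sides vanish
        rw [if_neg (by omega : ¬ j + 1 < M + 2)]
        rcases (by omega : j = M + 1 ∨ j = M + 2 ∨ M + 3 ≤ j) with rfl | rfl | hj4
        · -- m = M+2
          rw [if_pos (by omega : M + 1 < M + 2), if_pos (by omega : 1 ≤ M + 1 + 1),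
            if_pos (by omega : 2 ≤ M + 1 + 1),
            show M + 1 + 1 - 2 = M from by omega, coeff_derivative, coeff_derivative,
            hpbc0 (M+1+1+1) (by omega), hpbc (M+1) (by omega)]
          push_cast
          ring
        · -- m = M+3
          rw [if_neg (by omega : ¬ M + 2 < M + 2), if_pos (by omega : 1 ≤ M + 2 + 1),
            if_pos (by omega : 2 ≤ M + 2 + 1),
            show M + 2 + 1 - 2 = M + 1 from by omega, coeff_derivative, coeff_derivative,
            show M + 1 + 1 = M + 2 from by omega,
            hpbc0 (M+2+1+1) (by omega), hpbc (M+2) (by omega), haN]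
          push_cast
          ring
        · -- m ≥ M+4
          obtain ⟨i, rfl⟩ : ∃ i, j = i + M + 3 := ⟨j - M - 3, by omega⟩
          rw [if_neg (by omega : ¬ i + M + 3 < M + 2),
            if_pos (by omega : 1 ≤ i + M + 3 + 1),
            if_pos (by omega : 2 ≤ i + M + 3 + 1),
            show i + M + 3 + 1 - 2 = i + M + 2 from by omega,
            coeff_derivative, coeff_derivative, hpbc0 (i + M + 3) (by omega),
            hpbc0 (i + M + 3 + 1 + 1) (by omega)]
          ring

/-- `λ` satisfies the Liouville-type equation
`∂_t λ = a^{N-1} q ∂_x λ + (1+q²)(∂_q λ) ∂_x a^{N-1}` for all `q` and all points of `Ω`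
if and only if the coefficients `a^k` satisfy the hydrodynamic type system (A). -/
theorem statement0 (N : ℕ) (hN : 2 ≤ N) (Ω : Set (ℝ × ℝ)) (hΩ : IsOpen Ω)
    (a : ℕ → ℝ × ℝ → ℝ)
    (hdiff : ∀ k < N, DifferentiableOn ℝ (a k) Ω)
    (haN : ∀ z, a N z = 1) :
    (∀ (q : ℝ), ∀ z ∈ Ω,
        pdt (lam N a q) z =
          a (N - 1) z * q * pdx (lam N a q) z +
            (1 + q ^ 2) * deriv (fun q' => lam N a q' z) q * pdx (a (N - 1)) z) ↔
      SystemA N Ω a := by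
  obtain ⟨M, rfl⟩ : ∃ M, N = M + 2 := ⟨N - 2, by omega⟩
  have hd : ∀ z ∈ Ω, ∀ k < M + 2, DifferentiableAt ℝ (a k) z :=
    fun z hz k hk => (hdiff k hk).differentiableAt (hΩ.mem_nhds hz)
  constructor
  · intro H z hz
    exact (aux_master M a z (hd z hz) (haN z)).mp (fun q => H q z hz)
  · intro H q z hz
    exact (aux_master M a z (hd z hz) (haN z)).mpr (H z hz) q
end

section
/- Let N ≥ 2 and let a⁰,…,a^{N-1} : Ω → ℝ be differentiable functions on an open set Ω ⊆ ℝ² satisfying system (A). Let λ(q, a) = (1+q²)^{-N/2}·(q^N + Σ_{k=0}^{N-1} a^k q^k), and let q₀ : Ω → ℝ be a differentiable function such that (∂λ/∂q)(q₀(x,t), a(x,t)) = 0 at every point of Ω. Then the function r(x,t) := λ(q₀(x,t), a(x,t)) satisfies the diagonal equation ∂_t r = a^{N-1}(x,t)·q₀(x,t)·∂_x r on Ω. (Thus the critical values of λ are Riemann invariants of system (A) with characteristic velocities a^{N-1}q₀.) -/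
theorem key_sum (N : ℕ) (hN : 2 ≤ N) (q : ℝ) (A : ℕ → ℝ) (hAN : A N = 1) :
    A 1 + ∑ j ∈ Finset.range (N-1), q^(j+1) * (((j:ℝ)+2)*A (j+2) - ((N:ℝ)-j)*A j)
    = A (N-1) * q^N + ((1+q^2) * ((N:ℝ)*q^(N-1) + ∑ k ∈ Finset.range N, A k * (k * q^(k-1)))
      - (N:ℝ)*q*(q^N + ∑ k ∈ Finset.range N, A k * q^k)) := by
  obtain ⟨M, rfl⟩ : ∃ M, N = M + 1 := ⟨N - 1, (Nat.succ_pred_eq_of_pos (by omega)).symm⟩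
  simp only [Nat.add_sub_cancel] at *
  push_cast
  rw [show (∑ j ∈ Finset.range M, q^(j+1) * (((j:ℝ)+2)*A (j+2) - (((M:ℝ)+1)-j)*A j))
      = (∑ j ∈ Finset.range M, ((j:ℝ)+2)*A (j+2)*q^(j+1))
        - (∑ j ∈ Finset.range M, (((M:ℝ)+1)-j)*A j*q^(j+1)) by
    rw [← Finset.sum_sub_distrib]; apply Finset.sum_congr rfl; intro j hj; ring]
  have claim1 : A 1 + ∑ j ∈ Finset.range M, ((j:ℝ)+2)*A (j+2)*q^(j+1)
      = ((M:ℝ)+1)*q^M + ∑ k ∈ Finset.range (M+1), A k * (k * q^(k-1)) := by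
    have hT : ∑ j ∈ Finset.range (M+1), ((j:ℝ)+1)*A (j+1)*q^j
        = (∑ j ∈ Finset.range M, ((j:ℝ)+2)*A (j+2)*q^(j+1)) + A 1 := by
      rw [Finset.sum_range_succ']
      congr 1
      · apply Finset.sum_congr rfl; intro x _
        push_cast; ring_nf
      · norm_num
    have hT2 : ∑ j ∈ Finset.range (M+1), ((j:ℝ)+1)*A (j+1)*q^j
        = ((M:ℝ)+1)*q^M + ∑ k ∈ Finset.range (M+1), A k * (k * q^(k-1)) := by
      rw [Finset.sum_range_succ, Finset.sum_range_succ']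
      simp [hAN]
      rw [add_comm]
      congr 1
      apply Finset.sum_congr rfl; intro x _
      push_cast; ring
    linarith [hT, hT2]
  have hterm : ∀ k ∈ Finset.range (M+1), q^2 * (A k * (k * q^(k-1))) = A k * ((k:ℝ) * q^(k+1)) := by
    intro k _
    cases k with
    | zero => simp
    | succ m => simp only [Nat.add_sub_cancel]; push_cast; ring
  have h1 : q^2 * (∑ k ∈ Finset.range (M+1), A k * (k * q^(k-1)))
      = ∑ k ∈ Finset.range (M+1), A k * ((k:ℝ) * q^(k+1)) := by
    rw [Finset.mul_sum]; exact Finset.sum_congr rfl hterm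
  have h2 : ((M:ℝ)+1)*q*(∑ k ∈ Finset.range (M+1), A k * q^k)
      = ∑ k ∈ Finset.range (M+1), ((M:ℝ)+1) * A k * q^(k+1) := by
    rw [Finset.mul_sum]; apply Finset.sum_congr rfl; intro k _; ring
  have h3 : ∑ k ∈ Finset.range (M+1), (((M:ℝ)+1) * A k * q^(k+1) - A k * ((k:ℝ) * q^(k+1)))
      = (∑ j ∈ Finset.range M, (((M:ℝ)+1)-j)*A j*q^(j+1)) + A M * q^(M+1) := by
    rw [Finset.sum_range_succ]
    congr 1
    · apply Finset.sum_congr rfl; intro j _; ring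
    · ring
  have claim2 : (∑ j ∈ Finset.range M, (((M:ℝ)+1)-j)*A j*q^(j+1)) + A M * q^(M+1)
      = ((M:ℝ)+1)*q*(q^(M+1) + ∑ k ∈ Finset.range (M+1), A k * q^k)
        - q^2*(((M:ℝ)+1)*q^M + ∑ k ∈ Finset.range (M+1), A k * (k * q^(k-1))) := by
    rw [← h3, Finset.sum_sub_distrib, ← h1, ← h2]; ring
  linarith [claim1, claim2]

/-- if `q₀` is a differentiable branch of critical points of `λ` (i.e.
`∂λ/∂q = 0` at `q₀`), then the critical value `r = λ(q₀, a)` is a Riemann invariant: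
`∂_t r = a^{N-1}·q₀·∂_x r` on `Ω`. -/
theorem statement2 (N : ℕ) (hN : 2 ≤ N) (Ω : Set (ℝ × ℝ)) (hΩ : IsOpen Ω)
    (a : ℕ → ℝ × ℝ → ℝ)
    (hdiff : ∀ k < N, DifferentiableOn ℝ (a k) Ω)
    (haN : ∀ z, a N z = 1)
    (hA : SystemA N Ω a)
    (q₀ : ℝ × ℝ → ℝ) (hq₀ : DifferentiableOn ℝ q₀ Ω)
    (hcrit : ∀ z ∈ Ω, deriv (fun q => lam N a q z) (q₀ z) = 0) :
    ∀ z ∈ Ω,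
      pdt (fun w => lam N a (q₀ w) w) z =
        a (N - 1) z * q₀ z * pdx (fun w => lam N a (q₀ w) w) z := by
  intro z hz
  have hmem : Ω ∈ nhds z := hΩ.mem_nhds hz
  obtain ⟨M, rfl⟩ : ∃ M, N = M + 1 := ⟨N - 1, (Nat.succ_pred_eq_of_pos (by omega)).symm⟩
  have hM : 1 ≤ M := by omega
  have hq : HasFDerivAt q₀ (fderiv ℝ q₀ z) z := (hq₀.differentiableAt hmem).hasFDerivAt
  set q : ℝ := q₀ z with hqdef
  set Dq := fderiv ℝ q₀ z with hDq
  have ha : ∀ k < M+1, HasFDerivAt (a k) (fderiv ℝ (a k) z) z :=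
    fun k hk => ((hdiff k hk).differentiableAt hmem).hasFDerivAt
  -- one-variable derivative
  have h0 : HasDerivAt (fun s : ℝ => 1 + s^2) (2*q) q := by
    simpa using (hasDerivAt_pow 2 q).const_add 1
  have hf : HasDerivAt (fun s : ℝ => (1+s^2) ^ (-((M+1:ℕ):ℝ)/2))
      ((-((M+1:ℕ):ℝ)/2) * (1+q^2) ^ (-((M+1:ℕ):ℝ)/2 - 1) * (2*q)) q := by
    have h := h0.rpow_const (p := -((M+1:ℕ):ℝ)/2) (Or.inl (by positivity))
    convert h using 1; ring
  have hg : HasDerivAt (fun s : ℝ => s^(M+1) + ∑ k ∈ Finset.range (M+1), a k z * s^k)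
      (((M+1:ℕ):ℝ)*q^(M+1-1) + ∑ k ∈ Finset.range (M+1), a k z * (k * q^(k-1))) q := by
    refine (hasDerivAt_pow (M+1) q).add (HasDerivAt.fun_sum fun k _ => ?_)
    simpa [mul_comm] using (hasDerivAt_pow k q).const_mul (a k z)
  have hderiv0 : (-((M+1:ℕ):ℝ)/2) * (1+q^2) ^ (-((M+1:ℕ):ℝ)/2 - 1) * (2*q)
        * (q^(M+1) + ∑ k ∈ Finset.range (M+1), a k z * q^k)
      + (1+q^2) ^ (-((M+1:ℕ):ℝ)/2)
        * (((M+1:ℕ):ℝ)*q^(M+1-1) + ∑ k ∈ Finset.range (M+1), a k z * (k * q^(k-1))) = 0 := by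
    rw [← (hf.mul hg).deriv]
    exact hcrit z hz
  have hpos : (0:ℝ) < (1+q^2) ^ (-((M+1:ℕ):ℝ)/2 - 1) := Real.rpow_pos_of_pos (by positivity) _
  have hsplit : (1+q^2) ^ (-((M+1:ℕ):ℝ)/2) = (1+q^2) ^ (-((M+1:ℕ):ℝ)/2 - 1) * (1+q^2) := by
    rw [show (-((M+1:ℕ):ℝ)/2) = (-((M+1:ℕ):ℝ)/2 - 1) + 1 by ring,
      Real.rpow_add_one (by positivity : (1:ℝ)+q^2 ≠ 0)]
    norm_num
  have hB : (1+q^2) * (((M+1:ℕ):ℝ)*q^(M+1-1) + ∑ k ∈ Finset.range (M+1), a k z * (k * q^(k-1)))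
      - ((M+1:ℕ):ℝ)*q*(q^(M+1) + ∑ k ∈ Finset.range (M+1), a k z * q^k) = 0 := by
    have key : (1+q^2) ^ (-((M+1:ℕ):ℝ)/2 - 1) *
        ((1+q^2) * (((M+1:ℕ):ℝ)*q^(M+1-1) + ∑ k ∈ Finset.range (M+1), a k z * (k * q^(k-1)))
          - ((M+1:ℕ):ℝ)*q*(q^(M+1) + ∑ k ∈ Finset.range (M+1), a k z * q^k)) = 0 := by
      rw [hsplit] at hderiv0
      linear_combination hderiv0
    rcases mul_eq_zero.mp key with h | h
    · exact absurd h hpos.ne'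
    · exact h
  -- fderiv of the composite
  have hcomp_f : HasFDerivAt (fun w => (1 + q₀ w ^2) ^ (-((M+1:ℕ):ℝ)/2))
      (((-((M+1:ℕ):ℝ)/2) * (1+q^2) ^ (-((M+1:ℕ):ℝ)/2 - 1) * (2*q)) • Dq) z :=
    hf.comp_hasFDerivAt z hq
  have hpowk : ∀ k : ℕ, HasFDerivAt (fun w => q₀ w ^ k) (((k:ℝ)*q^(k-1)) • Dq) z :=
    fun k => (hasDerivAt_pow k q).comp_hasFDerivAt z hq
  have hsum : HasFDerivAt (fun w => q₀ w ^ (M+1) + ∑ k ∈ Finset.range (M+1), a k w * q₀ w ^ k)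
      (((((M+1:ℕ):ℝ)*q^(M+1-1)) • Dq) + ∑ k ∈ Finset.range (M+1),
        (a k z • (((k:ℝ)*q^(k-1)) • Dq) + (q^k) • fderiv ℝ (a k) z)) z := by
    refine (hpowk (M+1)).add (HasFDerivAt.fun_sum fun k hk => ?_)
    exact (ha k (Finset.mem_range.mp hk)).mul (hpowk k)
  have hr : HasFDerivAt (fun w => lam (M+1) a (q₀ w) w)
      ((1+q^2) ^ (-((M+1:ℕ):ℝ)/2) • (((((M+1:ℕ):ℝ)*q^(M+1-1)) • Dq) + ∑ k ∈ Finset.range (M+1),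
          (a k z • (((k:ℝ)*q^(k-1)) • Dq) + (q^k) • fderiv ℝ (a k) z))
        + (q^(M+1) + ∑ k ∈ Finset.range (M+1), a k z * q^k) •
          (((-((M+1:ℕ):ℝ)/2) * (1+q^2) ^ (-((M+1:ℕ):ℝ)/2 - 1) * (2*q)) • Dq)) z :=
    hcomp_f.mul hsum
  have hval : ∀ v : ℝ × ℝ, fderiv ℝ (fun w => lam (M+1) a (q₀ w) w) z v
      = (1+q^2) ^ (-((M+1:ℕ):ℝ)/2) * ∑ k ∈ Finset.range (M+1), q^k * (fderiv ℝ (a k) z v) := by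
    intro v
    rw [hr.fderiv]
    simp only [ContinuousLinearMap.add_apply, ContinuousLinearMap.smul_apply,
      ContinuousLinearMap.coe_sum', Finset.sum_apply, smul_eq_mul]
    rw [Finset.sum_add_distrib]
    rw [show (∑ k ∈ Finset.range (M+1), a k z * (((k:ℝ)*q^(k-1)) * Dq v))
        = (∑ k ∈ Finset.range (M+1), a k z * ((k:ℝ)*q^(k-1))) * Dq v by
      rw [Finset.sum_mul]; apply Finset.sum_congr rfl; intro k _; ring]
    rw [show (∑ k ∈ Finset.range (M+1), q^k * (fderiv ℝ (a k) z) v)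
        = ∑ k ∈ Finset.range (M+1), q^k * (fderiv ℝ (a k) z v) from rfl]
    linear_combination (Dq v) * hderiv0
  -- final assembly
  obtain ⟨hA0, hAk⟩ := hA z hz
  simp only [pdt, pdx, Nat.add_sub_cancel] at hA0 hAk ⊢
  rw [hval (0,1), hval (1,0)]
  have e_q : q * ∑ j ∈ Finset.range M, q^j * (fderiv ℝ (a j) z (1,0))
      = ∑ j ∈ Finset.range M, q^(j+1) * (fderiv ℝ (a j) z (1,0)) := by
    rw [Finset.mul_sum]; apply Finset.sum_congr rfl; intro j _; ring
  have e_T : ∑ k ∈ Finset.range (M+1), q^k * (fderiv ℝ (a k) z (0,1))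
      = a M z * (∑ j ∈ Finset.range M, q^(j+1) * (fderiv ℝ (a j) z (1,0)))
        + (a 1 z + ∑ j ∈ Finset.range M, q^(j+1) * (((j:ℝ)+2)*a (j+2) z - (((M:ℝ)+1)-j)*a j z))
          * (fderiv ℝ (a M) z (1,0)) := by
    have step : ∀ j ∈ Finset.range M, q^(j+1) * (fderiv ℝ (a (j+1)) z (0,1))
        = a M z * (q^(j+1) * fderiv ℝ (a j) z (1,0))
          + (q^(j+1) * (((j:ℝ)+2)*a (j+2) z - (((M:ℝ)+1)-j)*a j z)) * fderiv ℝ (a M) z (1,0) := by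
      intro j hj
      rw [hAk (j+1) (by omega) (by have := Finset.mem_range.mp hj; omega)]
      simp only [Nat.add_sub_cancel]
      push_cast; ring
    rw [Finset.sum_range_succ', Finset.sum_congr rfl step, Finset.sum_add_distrib,
      ← Finset.mul_sum, ← Finset.sum_mul, hA0]
    ring
  have hkey : a 1 z + ∑ j ∈ Finset.range M, q^(j+1) * (((j:ℝ)+2)*a (j+2) z - (((M:ℝ)+1)-j)*a j z)
      = a M z * q^(M+1) := by
    have h := key_sum (M+1) hN q (fun k => a k z) (haN z)
    simp only [Nat.add_sub_cancel] at h
    push_cast at h hB ⊢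
    linarith [h, hB]
  have hfinal : ∑ k ∈ Finset.range (M+1), q^k * (fderiv ℝ (a k) z (0,1))
      = a M z * q * ∑ k ∈ Finset.range (M+1), q^k * (fderiv ℝ (a k) z (1,0)) := by
    rw [e_T, hkey, Finset.sum_range_succ (fun k => q^k * (fderiv ℝ (a k) z (1,0))) M]
    linear_combination (- a M z) * e_q
  linear_combination ((1+q^2) ^ (-((M+1:ℕ):ℝ)/2)) * hfinal
end

section
/- Let N ≥ 2 and let a⁰,…,a^{N-1} : Ω → ℝ be differentiable functions on an open set Ω ⊆ ℝ² satisfying system (A). Let λ(q, a) = (1+q²)^{-N/2}·(q^N + Σ_{k=0}^{N-1} a^k q^k), and let q : Ω → ℝ be a differentiable function such that λ(q(x,t), a(x,t)) is constant on Ω and (∂λ/∂q)(q(x,t), a(x,t)) ≠ 0 at every point of Ω. Then q satisfies ∂_t q = a^{N-1}·q·∂_x q − (1+q²)·∂_x a^{N-1} on Ω. -/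
lemma genDeriv (N : ℕ) (u : ℝ → ℝ) (A : ℕ → ℝ → ℝ) (s₀ u' : ℝ) (A' : ℕ → ℝ)
    (hu : HasDerivAt u u' s₀) (hA : ∀ k ∈ Finset.range N, HasDerivAt (A k) (A' k) s₀) :
    HasDerivAt
      (fun s => (1 + u s ^ 2) ^ (-(N : ℝ) / 2) *
        (u s ^ N + ∑ k ∈ Finset.range N, A k s * u s ^ k))
      (u' * ((-(N : ℝ) * u s₀ * (1 + u s₀ ^ 2) ^ (-(N : ℝ) / 2 - 1)) *
            (u s₀ ^ N + ∑ k ∈ Finset.range N, A k s₀ * u s₀ ^ k)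
          + (1 + u s₀ ^ 2) ^ (-(N : ℝ) / 2) *
            ((N : ℝ) * u s₀ ^ (N - 1) + ∑ k ∈ Finset.range N, A k s₀ * ((k : ℝ) * u s₀ ^ (k - 1))))
        + (1 + u s₀ ^ 2) ^ (-(N : ℝ) / 2) * ∑ k ∈ Finset.range N, A' k * u s₀ ^ k) s₀ := by
  have hpos : (0:ℝ) < 1 + u s₀ ^ 2 := by positivity
  have h1 : HasDerivAt (fun s => 1 + u s ^ 2) ((2:ℕ) * u s₀ ^ (2-1) * u') s₀ :=
    (hu.pow 2).const_add 1
  have hC : HasDerivAt (fun s => (1 + u s ^ 2) ^ (-(N : ℝ) / 2))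
      ((2:ℕ) * u s₀ ^ (2-1) * u' * (-(N : ℝ) / 2) * (1 + u s₀ ^ 2) ^ (-(N : ℝ) / 2 - 1)) s₀ :=
    h1.rpow_const (Or.inl (ne_of_gt hpos))
  have hS : HasDerivAt (fun s => u s ^ N + ∑ k ∈ Finset.range N, A k s * u s ^ k)
      ((N : ℝ) * u s₀ ^ (N - 1) * u' +
        ∑ k ∈ Finset.range N, (A' k * u s₀ ^ k + A k s₀ * ((k : ℝ) * u s₀ ^ (k - 1) * u'))) s₀ :=
    (hu.pow N).add (HasDerivAt.fun_sum fun k hk => (hA k hk).mul (hu.pow k))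
  have this2 := hC.mul hS
  have hsum : ∑ k ∈ Finset.range N, (A' k * u s₀ ^ k + A k s₀ * ((k : ℝ) * u s₀ ^ (k - 1) * u'))
      = (∑ k ∈ Finset.range N, A' k * u s₀ ^ k)
        + u' * ∑ k ∈ Finset.range N, A k s₀ * ((k : ℝ) * u s₀ ^ (k - 1)) := by
    rw [Finset.sum_add_distrib, Finset.mul_sum]
    congr 1
    exact Finset.sum_congr rfl fun k _ => by ring
  rw [hsum] at this2
  have e : (2:ℕ) * u s₀ ^ (2-1) * u' * (-(N : ℝ) / 2) * (1 + u s₀ ^ 2) ^ (-(N : ℝ) / 2 - 1) *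
        (u s₀ ^ N + ∑ k ∈ Finset.range N, A k s₀ * u s₀ ^ k) +
      (1 + u s₀ ^ 2) ^ (-(N : ℝ) / 2) *
        ((N : ℝ) * u s₀ ^ (N - 1) * u' +
          ((∑ k ∈ Finset.range N, A' k * u s₀ ^ k)
            + u' * ∑ k ∈ Finset.range N, A k s₀ * ((k : ℝ) * u s₀ ^ (k - 1))))
      = u' * ((-(N : ℝ) * u s₀ * (1 + u s₀ ^ 2) ^ (-(N : ℝ) / 2 - 1)) *
            (u s₀ ^ N + ∑ k ∈ Finset.range N, A k s₀ * u s₀ ^ k)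
          + (1 + u s₀ ^ 2) ^ (-(N : ℝ) / 2) *
            ((N : ℝ) * u s₀ ^ (N - 1) + ∑ k ∈ Finset.range N, A k s₀ * ((k : ℝ) * u s₀ ^ (k - 1))))
        + (1 + u s₀ ^ 2) ^ (-(N : ℝ) / 2) * ∑ k ∈ Finset.range N, A' k * u s₀ ^ k := by
    push_cast
    ring
  rw [e] at this2
  exact this2

open Finset in
lemma keyIdentity (M : ℕ) (Q : ℝ) (b u w : ℕ → ℝ)
    (hbtop : b (M + 2) = 1)
    (h0 : w 0 = b 1 * u (M + 1))
    (hk : ∀ k, 1 ≤ k → k ≤ M + 1 →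
      w k = b (M + 1) * u (k - 1) +
        (((k : ℝ) + 1) * b (k + 1) - ((M : ℝ) + 3 - (k : ℝ)) * b (k - 1)) * u (M + 1)) :
    ∑ k ∈ range (M + 2), w k * Q ^ k
      = b (M + 1) * Q * ∑ k ∈ range (M + 2), u k * Q ^ k
        + u (M + 1) * ((1 + Q ^ 2) *
            (((M : ℝ) + 2) * Q ^ (M + 1) + ∑ k ∈ range (M + 2), b k * ((k : ℝ) * Q ^ (k - 1)))
          - ((M : ℝ) + 2) * Q * (Q ^ (M + 2) + ∑ k ∈ range (M + 2), b k * Q ^ k)) := by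
  set E := ∑ i ∈ range M, ((i : ℝ) + 2) * b (i + 2) * Q ^ (i + 1) with hE
  set W := ∑ k ∈ range (M + 1), b k * Q ^ (k + 1) with hW
  set V := ∑ k ∈ range (M + 1), (k : ℝ) * b k * Q ^ (k + 1) with hV
  set U := ∑ k ∈ range (M + 1), u k * Q ^ k with hU
  set SW := ∑ k ∈ range (M + 1), b k * Q ^ k with hSW
  set T := ∑ j ∈ range (M + 1), b (j + 1) * (((j : ℝ) + 1) * Q ^ j) with hT0
  -- LHS computation
  have hLHS : ∑ k ∈ range (M + 2), w k * Q ^ k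
      = b (M + 1) * Q * U + u (M + 1) *
          (b 1 + (E + ((M : ℝ) + 2) * Q ^ (M + 1)) - (((M : ℝ) + 2) * W - V)) := by
    rw [Finset.sum_range_succ']
    have e1 : ∀ j ∈ range (M + 1), w (j + 1) * Q ^ (j + 1)
        = b (M + 1) * (u j * Q ^ (j + 1))
          + ((((j : ℝ) + 2) * b (j + 2) * Q ^ (j + 1)
              - (((M : ℝ) + 2) * (b j * Q ^ (j + 1)) - (j : ℝ) * b j * Q ^ (j + 1)))
             * u (M + 1)) := by
      intro j hj
      rw [hk (j + 1) (by omega) (by have := Finset.mem_range.mp hj; omega)]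
      push_cast
      ring_nf
    rw [Finset.sum_congr rfl e1, Finset.sum_add_distrib, h0, ← Finset.sum_mul,
      Finset.sum_sub_distrib, Finset.sum_sub_distrib, ← Finset.mul_sum]
    have hUm : ∑ x ∈ range (M + 1), u x * Q ^ (x + 1) = Q * U := by
      rw [hU, Finset.mul_sum]; exact Finset.sum_congr rfl fun k _ => by ring
    have hEE : ∑ x ∈ range (M + 1), ((x : ℝ) + 2) * b (x + 2) * Q ^ (x + 1)
        = E + ((M : ℝ) + 2) * Q ^ (M + 1) := by
      rw [Finset.sum_range_succ, hbtop, hE]; push_cast; ring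
    have hVV : ∑ x ∈ range (M + 1), ((M : ℝ) + 2) * (b x * Q ^ (x + 1)) = ((M : ℝ) + 2) * W := by
      rw [hW, Finset.mul_sum]
    rw [hUm, hEE, hVV, ← hV]
    ring
  rw [hLHS]
  -- RHS sums
  have hTs : ∑ k ∈ range (M + 2), b k * ((k : ℝ) * Q ^ (k - 1)) = T := by
    rw [Finset.sum_range_succ', hT0]
    simp
  have hUs : ∑ k ∈ range (M + 2), u k * Q ^ k = U + u (M + 1) * Q ^ (M + 1) :=
    Finset.sum_range_succ _ _
  have hSs : ∑ k ∈ range (M + 2), b k * Q ^ k = SW + b (M + 1) * Q ^ (M + 1) :=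
    Finset.sum_range_succ _ _
  rw [hTs, hUs, hSs]
  -- facts
  have hT : T = b 1 + E := by
    rw [hT0, Finset.sum_range_succ', hE]
    simp only [Nat.cast_add, Nat.cast_ofNat, Nat.cast_zero, pow_zero, Nat.cast_one]
    have : ∀ i ∈ range M, b (i + 1 + 1) * (((i : ℝ) + 1 + 1) * Q ^ (i + 1))
        = ((i : ℝ) + 2) * b (i + 2) * Q ^ (i + 1) := fun i _ => by ring
    rw [Finset.sum_congr rfl this]
    ring
  have hQ2T : Q ^ 2 * T = V + ((M : ℝ) + 1) * b (M + 1) * Q ^ (M + 2) := by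
    have hV2 : ∑ k ∈ range (M + 2), (k : ℝ) * b k * Q ^ (k + 1)
        = V + ((M : ℝ) + 1) * b (M + 1) * Q ^ (M + 2) := by
      rw [Finset.sum_range_succ, hV]; push_cast; ring
    rw [← hV2, Finset.sum_range_succ', hT0, Finset.mul_sum]
    simp only [Nat.cast_zero, zero_mul, mul_zero, add_zero, Nat.cast_add, Nat.cast_one, pow_zero]
    exact Finset.sum_congr rfl fun j _ => by push_cast; ring
  have hQSW : Q * SW = W := by
    rw [hSW, hW, Finset.mul_sum]; exact Finset.sum_congr rfl fun k _ => by ring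
  linear_combination (-(u (M + 1))) * hT + (-(u (M + 1))) * hQ2T
    + (u (M + 1) * ((M : ℝ) + 2)) * hQSW

open Finset in
/-- if `q` is a differentiable function on `Ω` such that `λ(q(x,t), a(x,t))`
is constant on `Ω` and `∂λ/∂q ≠ 0` along `q`, then `q` satisfies
`∂_t q = a^{N-1}·q·∂_x q − (1+q²)·∂_x a^{N-1}` on `Ω`. -/
theorem statement3 (N : ℕ) (hN : 2 ≤ N) (Ω : Set (ℝ × ℝ)) (hΩ : IsOpen Ω)
    (a : ℕ → ℝ × ℝ → ℝ)
    (hdiff : ∀ k < N, DifferentiableOn ℝ (a k) Ω)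
    (haN : ∀ z, a N z = 1)
    (hA : SystemA N Ω a)
    (q : ℝ × ℝ → ℝ) (hq : DifferentiableOn ℝ q Ω)
    (hconst : ∃ c : ℝ, ∀ z ∈ Ω, lam N a (q z) z = c)
    (hreg : ∀ z ∈ Ω, deriv (fun q' => lam N a q' z) (q z) ≠ 0) :
    ∀ z ∈ Ω,
      pdt q z =
        a (N - 1) z * q z * pdx q z - (1 + (q z) ^ 2) * pdx (a (N - 1)) z := by
  obtain ⟨M, rfl⟩ : ∃ M, N = M + 2 := ⟨N - 2, by omega⟩
  intro z hz
  have hzn : Ω ∈ nhds z := hΩ.mem_nhds hz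
  have hqz : DifferentiableAt ℝ q z := (hq z hz).differentiableAt hzn
  have haz : ∀ k, k < M + 2 → DifferentiableAt ℝ (a k) z :=
    fun k hk => ((hdiff k hk) z hz).differentiableAt hzn
  set Q : ℝ := q z with hQdef
  have hpos : (0 : ℝ) < 1 + Q ^ 2 := by positivity
  set C : ℝ := (1 + Q ^ 2) ^ (-((M : ℝ) + 2) / 2) with hCdef
  set S : ℝ := Q ^ (M + 2) + ∑ k ∈ range (M + 2), a k z * Q ^ k with hSdef
  set Sd : ℝ := ((M : ℝ) + 2) * Q ^ (M + 1) +
      ∑ k ∈ range (M + 2), a k z * ((k : ℝ) * Q ^ (k - 1)) with hSddef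
  set Lq : ℝ := (-((M : ℝ) + 2) * Q * (1 + Q ^ 2) ^ (-((M : ℝ) + 2) / 2 - 1)) * S + C * Sd
    with hLqdef
  -- derivative in q
  have hLq : HasDerivAt (fun p => lam (M + 2) a p z) Lq Q := by
    have h := genDeriv (M + 2) (fun p => p) (fun k _ => a k z) Q 1 (fun _ => 0)
      (hasDerivAt_id Q) (fun k _ => hasDerivAt_const Q (a k z))
    simp only [zero_mul, Finset.sum_const_zero, mul_zero, add_zero, one_mul] at h
    convert h using 1
    · rfl
    rw [hLqdef, hCdef, hSdef, hSddef]
    push_cast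
    norm_num
  have hLqne : Lq ≠ 0 := by
    have h := hreg z hz
    rwa [hLq.deriv] at h
  obtain ⟨c, hc⟩ := hconst
  -- directional derivatives
  have main : ∀ v : ℝ × ℝ,
      fderiv ℝ q z v * Lq + C * ∑ k ∈ range (M + 2), fderiv ℝ (a k) z v * Q ^ k = 0 := by
    intro v
    have hφ : HasDerivAt (fun s : ℝ => z + s • v) v 0 := by
      simpa using ((hasDerivAt_id (0 : ℝ)).smul_const v).const_add z
    have hu : HasDerivAt (fun s : ℝ => q (z + s • v)) (fderiv ℝ q z v) 0 :=
      hqz.hasFDerivAt.comp_hasDerivAt_of_eq 0 hφ (by simp)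
    have hAk : ∀ k ∈ range (M + 2),
        HasDerivAt (fun s : ℝ => a k (z + s • v)) (fderiv ℝ (a k) z v) 0 :=
      fun k hk => ((haz k (mem_range.mp hk)).hasFDerivAt).comp_hasDerivAt_of_eq 0 hφ (by simp)
    have hg := genDeriv (M + 2) (fun s => q (z + s • v)) (fun k s => a k (z + s • v)) 0
      (fderiv ℝ q z v) (fun k => fderiv ℝ (a k) z v) hu hAk
    simp only [zero_smul, add_zero] at hg
    have hzero : deriv (fun s : ℝ => lam (M + 2) a (q (z + s • v)) (z + s • v)) 0 = 0 := by
      have hev : (fun s : ℝ => lam (M + 2) a (q (z + s • v)) (z + s • v))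
          =ᶠ[nhds (0 : ℝ)] fun _ => c := by
        have hcont : Continuous fun s : ℝ => z + s • v :=
          continuous_const.add (continuous_id.smul continuous_const)
        have hmem : ∀ᶠ s in nhds (0 : ℝ), z + s • v ∈ Ω := by
          have h0 : z + (0 : ℝ) • v ∈ Ω := by simpa using hz
          exact hcont.continuousAt.preimage_mem_nhds (hΩ.mem_nhds h0)
        filter_upwards [hmem] with s hs
        exact hc _ hs
      rw [hev.deriv_eq, deriv_const]
    have hraw := hg.deriv.symm.trans (show deriv _ (0 : ℝ) = (0 : ℝ) from hzero)
    rw [hLqdef, hCdef, hSdef, hSddef]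
    push_cast at hraw ⊢
    linear_combination hraw
  have E1 := main (1, 0)
  have E2 := main (0, 1)
  have hfx : ∀ f : ℝ × ℝ → ℝ, (fderiv ℝ f z) (1, 0) = pdx f z := fun _ => rfl
  have hft : ∀ f : ℝ × ℝ → ℝ, (fderiv ℝ f z) (0, 1) = pdt f z := fun _ => rfl
  simp only [hfx] at E1
  simp only [hft] at E2
  -- system A
  obtain ⟨hA0, hAk'⟩ := hA z hz
  have hsub : M + 2 - 1 = M + 1 := rfl
  rw [hsub] at hA0 hAk'
  have key := keyIdentity M Q (fun k => a k z) (fun k => pdx (a k) z) (fun k => pdt (a k) z)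
    (haN z) (by simpa using hA0)
    (by
      intro k hk1 hk2
      rw [hAk' k hk1 hk2]
      push_cast
      ring)
  -- rpow manipulation
  have hmul : (1 + Q ^ 2) * (1 + Q ^ 2) ^ (-((M : ℝ) + 2) / 2 - 1) = C := by
    rw [Real.rpow_sub hpos, Real.rpow_one, hCdef]
    field_simp
  have hLqmul : (1 + Q ^ 2) * Lq = C * ((1 + Q ^ 2) * Sd - ((M : ℝ) + 2) * Q * S) := by
    rw [hLqdef]
    linear_combination (-((M : ℝ) + 2) * Q * S) * hmul
  -- finish
  show pdt q z = a (M + 1) z * Q * pdx q z - (1 + Q ^ 2) * pdx (a (M + 1)) z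
  have goal' : pdt q z * Lq =
      (a (M + 1) z * Q * pdx q z - (1 + Q ^ 2) * pdx (a (M + 1)) z) * Lq := by
    linear_combination E2 - (a (M + 1) z) * Q * E1 + (pdx (a (M + 1)) z) * hLqmul - C * key
  exact mul_right_cancel₀ hLqne goal'
end

section
/- Let g : Ω → ℝ and q : Ω → ℝ be differentiable functions on an open set Ω ⊆ ℝ² with coordinates (x,t), and suppose ∂_t q = g·q·∂_x q − (1+q²)·∂_x g on Ω. Then the function p := −q/√(1+q²), which takes values in (−1,1), satisfies the conservation law ∂_t p = ∂_x( g·√(1−p²) ) on Ω. -/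
lemma one_add_sq_pos (y : ℝ) : 0 < 1 + y ^ 2 := by positivity

lemma sqrt1_pos (y : ℝ) : 0 < Real.sqrt (1 + y ^ 2) :=
  Real.sqrt_pos.2 (one_add_sq_pos y)

lemma sq_sqrt1 (y : ℝ) : Real.sqrt (1 + y ^ 2) ^ 2 = 1 + y ^ 2 :=
  Real.sq_sqrt (one_add_sq_pos y).le

lemma hasDerivAt_sqrt1 (y : ℝ) :
    HasDerivAt (fun y : ℝ => Real.sqrt (1 + y ^ 2)) (y / Real.sqrt (1 + y ^ 2)) y := by
  have h : HasDerivAt (fun y : ℝ => 1 + y ^ 2) (2 * y) y := by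
    simpa using (hasDerivAt_pow 2 y).const_add 1
  have h2 := h.sqrt (one_add_sq_pos y).ne'
  convert h2 using 1
  field_simp

lemma hasDerivAt_phi (y : ℝ) :
    HasDerivAt (fun y : ℝ => -y / Real.sqrt (1 + y ^ 2))
      (-(((1 + y ^ 2) * Real.sqrt (1 + y ^ 2))⁻¹)) y := by
  have h1 : HasDerivAt (fun y : ℝ => -y) (-1) y := (hasDerivAt_id y).neg
  have h := h1.div (hasDerivAt_sqrt1 y) (sqrt1_pos y).ne'
  refine h.congr_deriv (Eq.symm ?_)
  have hs := sq_sqrt1 y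
  have hp := sqrt1_pos y
  field_simp
  nlinarith [hs, hp]

lemma hasDerivAt_psi (y : ℝ) :
    HasDerivAt (fun y : ℝ => (Real.sqrt (1 + y ^ 2))⁻¹)
      (-(y / ((1 + y ^ 2) * Real.sqrt (1 + y ^ 2)))) y := by
  have h := (hasDerivAt_sqrt1 y).inv (sqrt1_pos y).ne'
  refine h.congr_deriv (Eq.symm ?_)
  rw [sq_sqrt1 y, neg_div, div_div, mul_comm]

lemma sqrt_one_sub (y : ℝ) :
    Real.sqrt (1 - (-y / Real.sqrt (1 + y ^ 2)) ^ 2) = (Real.sqrt (1 + y ^ 2))⁻¹ := by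
  have hu := one_add_sq_pos y
  have hs := sq_sqrt1 y
  have h : 1 - (-y / Real.sqrt (1 + y ^ 2)) ^ 2 = (1 + y ^ 2)⁻¹ := by
    rw [div_pow, hs]
    field_simp
    ring
  rw [h, Real.sqrt_inv]

/-- if `∂_t q = g·q·∂_x q − (1+q²)·∂_x g` on an open set `Ω`, then
`p := −q/√(1+q²)` takes values in `(−1,1)` and satisfies the conservation law
`∂_t p = ∂_x(g·√(1−p²))` on `Ω`. -/
theorem statement4 (Ω : Set (ℝ × ℝ)) (hΩ : IsOpen Ω)
    (g q : ℝ × ℝ → ℝ)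
    (hg : DifferentiableOn ℝ g Ω) (hq : DifferentiableOn ℝ q Ω)
    (heq : ∀ z ∈ Ω,
      pdt q z = g z * q z * pdx q z - (1 + (q z) ^ 2) * pdx g z) :
    (∀ z, -(q z) / Real.sqrt (1 + (q z) ^ 2) ∈ Set.Ioo (-1 : ℝ) 1) ∧
    ∀ z ∈ Ω,
      pdt (fun w => -(q w) / Real.sqrt (1 + (q w) ^ 2)) z =
        pdx (fun w =>
          g w * Real.sqrt (1 - (-(q w) / Real.sqrt (1 + (q w) ^ 2)) ^ 2)) z := by
  constructor
  · intro z
    set y := q z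
    have hp := sqrt1_pos y
    have habs : |(-y) / Real.sqrt (1 + y ^ 2)| < 1 := by
      rw [abs_div, abs_of_pos hp, div_lt_one hp, abs_neg]
      exact (Real.lt_sqrt (abs_nonneg y)).2 (by nlinarith [sq_abs y])
    exact abs_lt.1 habs
  · intro z hz
    have hqz : HasFDerivAt q (fderiv ℝ q z) z :=
      ((hq z hz).differentiableAt (hΩ.mem_nhds hz)).hasFDerivAt
    have hgz : HasFDerivAt g (fderiv ℝ g z) z :=
      ((hg z hz).differentiableAt (hΩ.mem_nhds hz)).hasFDerivAt
    set Q := fderiv ℝ q z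
    set G := fderiv ℝ g z
    -- derivative of p
    have hp : HasFDerivAt (fun w => -(q w) / Real.sqrt (1 + (q w) ^ 2))
        ((-(((1 + (q z) ^ 2) * Real.sqrt (1 + (q z) ^ 2))⁻¹)) • Q) z :=
      (hasDerivAt_phi (q z)).comp_hasFDerivAt z hqz
    -- rewrite the flux function
    have hfun : (fun w => g w * Real.sqrt (1 - (-(q w) / Real.sqrt (1 + (q w) ^ 2)) ^ 2))
        = fun w => g w * (Real.sqrt (1 + (q w) ^ 2))⁻¹ := by
      funext w; rw [sqrt_one_sub]
    have hpsi : HasFDerivAt (fun w => (Real.sqrt (1 + (q w) ^ 2))⁻¹)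
        ((-((q z) / ((1 + (q z) ^ 2) * Real.sqrt (1 + (q z) ^ 2)))) • Q) z :=
      (hasDerivAt_psi (q z)).comp_hasFDerivAt z hqz
    have hflux : HasFDerivAt (fun w => g w * (Real.sqrt (1 + (q w) ^ 2))⁻¹)
        (g z • ((-((q z) / ((1 + (q z) ^ 2) * Real.sqrt (1 + (q z) ^ 2)))) • Q)
          + (Real.sqrt (1 + (q z) ^ 2))⁻¹ • G) z := hgz.mul hpsi
    rw [hfun]
    unfold pdt pdx
    rw [hp.fderiv, hflux.fderiv]
    simp only [ContinuousLinearMap.add_apply, ContinuousLinearMap.smul_apply, smul_eq_mul]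
    have hT := heq z hz
    unfold pdt pdx at hT
    have hs := sq_sqrt1 (q z)
    have hpos := sqrt1_pos (q z)
    have hu := one_add_sq_pos (q z)
    rw [hT]
    field_simp
    nlinarith [hs, hpos, hu, sq_nonneg (Q (1,0)), sq_nonneg (G (1,0))]
end

section
/- Let U ⊆ ℝ^N be open with coordinates r = (r¹,…,r^N), and let q₁,…,q_N : U → ℝ and A : U → ℝ be twice continuously differentiable with q_i(r) ≠ q_k(r) for all i ≠ k and all r ∈ U. Suppose the Gibbons–Tsarev type system holds: for all i ≠ k, ∂_i q_k = (1+q_k²)/(q_i − q_k)·∂_i A and ∂_i ∂_k A = 2(1+q_i q_k)/(q_i − q_k)²·∂_i A·∂_k A (where ∂_i = ∂/∂r^i). Define, for q ∈ ℝ with q ∉ {q₁(r),…,q_N(r)}, the functions F_j(q,r) = (1+q²)·∂_j A(r)/(q_j(r) − q). Then the Frobenius compatibility condition for the overdetermined Löwner-type system ∂_i q = F_i(q,r) holds: for all i ≠ k, ∂_k F_i + F_k·∂_q F_i = ∂_i F_k + F_i·∂_q F_k. -/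
/-- Partial derivative along the `i`-th coordinate direction in `ℝ^N`. -/
noncomputable def pd {N : ℕ} (i : Fin N) (f : (Fin N → ℝ) → ℝ) (r : Fin N → ℝ) : ℝ :=
  fderiv ℝ f r (Pi.single i 1)

/-- The right-hand side `F_j(q,r) = (1+q²)·∂_j A(r)/(q_j(r) − q)` of the
Löwner-type system `∂_j q = F_j(q,r)`. -/
noncomputable def lownerF {N : ℕ} (qf : Fin N → (Fin N → ℝ) → ℝ) (A : (Fin N → ℝ) → ℝ)
    (j : Fin N) (q : ℝ) (r : Fin N → ℝ) : ℝ :=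
  (1 + q ^ 2) * fderiv ℝ A r (Pi.single j 1) / (qf j r - q)

/-- Product rule for `pd`. -/
lemma pd_mul {N : ℕ} (k : Fin N) {g h : (Fin N → ℝ) → ℝ} {r : Fin N → ℝ}
    (hg : DifferentiableAt ℝ g r) (hh : DifferentiableAt ℝ h r) :
    pd k (fun r' => g r' * h r') r = pd k g r * h r + g r * pd k h r := by
  unfold pd
  rw [fderiv_fun_mul hg hh]
  simp [smul_smul]
  ring

/-- Reciprocal rule for `pd`. -/
lemma pd_inv {N : ℕ} (k : Fin N) {h : (Fin N → ℝ) → ℝ} {r : Fin N → ℝ}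
    (hh : DifferentiableAt ℝ h r) (hne : h r ≠ 0) :
    pd k (fun r' => (h r')⁻¹) r = -pd k h r / h r ^ 2 := by
  have H : HasFDerivAt (fun r' => (h r')⁻¹)
      ((-(h r ^ 2)⁻¹) • fderiv ℝ h r) r := by
    have h1 : HasDerivAt (fun y : ℝ => y⁻¹) (-(h r ^ 2)⁻¹) (h r) := hasDerivAt_inv hne
    exact h1.comp_hasFDerivAt r hh.hasFDerivAt
  unfold pd
  rw [H.fderiv]
  simp
  field_simp

/-- `pd` of a constant multiple. -/
lemma pd_const_mul {N : ℕ} (k : Fin N) {g : (Fin N → ℝ) → ℝ} {r : Fin N → ℝ} (c : ℝ)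
    (hg : DifferentiableAt ℝ g r) :
    pd k (fun r' => c * g r') r = c * pd k g r := by
  unfold pd
  rw [fderiv_const_mul hg c]
  simp

/-- `pd` of subtracting a constant. -/
lemma pd_sub_const {N : ℕ} (k : Fin N) {g : (Fin N → ℝ) → ℝ} {r : Fin N → ℝ} (c : ℝ) :
    pd k (fun r' => g r' - c) r = pd k g r := by
  unfold pd
  rw [fderiv_sub_const]

/-- Quotient rule for the specific shape `c·g/(b−q)`. -/
lemma pd_div_formula {N : ℕ} (k : Fin N) {g b : (Fin N → ℝ) → ℝ} {r : Fin N → ℝ} (c q : ℝ)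
    (hg : DifferentiableAt ℝ g r) (hb : DifferentiableAt ℝ b r) (h : b r - q ≠ 0) :
    pd k (fun r' => c * g r' / (b r' - q)) r
      = (c * pd k g r * (b r - q) - c * g r * pd k b r) / (b r - q) ^ 2 := by
  have hbq : DifferentiableAt ℝ (fun r' => b r' - q) r := hb.sub_const q
  have hinv : DifferentiableAt ℝ (fun r' => (b r' - q)⁻¹) r := hbq.inv h
  have hcg : DifferentiableAt ℝ (fun r' => c * g r') r := hg.const_mul c
  have e : (fun r' => c * g r' / (b r' - q))
      = fun r' => (c * g r') * ((fun r'' => b r'' - q) r')⁻¹ := by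
    funext r'; rw [div_eq_mul_inv]
  rw [e, pd_mul k hcg hinv, pd_const_mul k c hg,
      pd_inv k hbq h, pd_sub_const k q]
  field_simp
  ring

/-- `q`-derivative of `q' ↦ (1+q'²)·P/(X−q')`. -/
lemma deriv_lowner_q (P X q : ℝ) (h : X - q ≠ 0) :
    deriv (fun q' => (1 + q' ^ 2) * P / (X - q')) q
      = (2 * q * P * (X - q) + (1 + q ^ 2) * P) / (X - q) ^ 2 := by
  have h1 : HasDerivAt (fun q' : ℝ => (1 + q' ^ 2) * P) (2 * q * P) q := by
    have : HasDerivAt (fun q' : ℝ => 1 + q' ^ 2) ((2 : ℕ) * q ^ 1) q :=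
      (hasDerivAt_pow 2 q).const_add 1
    simpa using this.mul_const P
  have h2 : HasDerivAt (fun q' : ℝ => X - q') (-1) q := by
    simpa using (hasDerivAt_id q).const_sub X
  have := (h1.div h2 h).deriv
  rw [show (fun q' => (1 + q' ^ 2) * P / (X - q')) = ((fun q' => (1 + q' ^ 2) * P) / fun q' => X - q') from rfl, this]
  ring_nf

/-- the Gibbons–Tsarev type system implies the Frobenius compatibility
condition `∂_k F_i + F_k·∂_q F_i = ∂_i F_k + F_i·∂_q F_k` for the overdetermined
Löwner-type system `∂_i q = F_i(q,r)`. -/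
theorem statement5 (N : ℕ) (U : Set (Fin N → ℝ)) (hU : IsOpen U)
    (qf : Fin N → (Fin N → ℝ) → ℝ) (A : (Fin N → ℝ) → ℝ)
    (hqf : ∀ i, ContDiffOn ℝ 2 (qf i) U) (hA : ContDiffOn ℝ 2 A U)
    (hdist : ∀ i k, i ≠ k → ∀ r ∈ U, qf i r ≠ qf k r)
    (hGT1 : ∀ i k, i ≠ k → ∀ r ∈ U,
      pd i (qf k) r = (1 + (qf k r) ^ 2) / (qf i r - qf k r) * pd i A r)
    (hGT2 : ∀ i k, i ≠ k → ∀ r ∈ U,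
      pd i (fun r' => pd k A r') r =
        2 * (1 + qf i r * qf k r) / (qf i r - qf k r) ^ 2 * pd i A r * pd k A r) :
    ∀ i k, i ≠ k → ∀ r ∈ U, ∀ q : ℝ, (∀ m, q ≠ qf m r) →
      pd k (fun r' => lownerF qf A i q r') r +
          lownerF qf A k q r * deriv (fun q' => lownerF qf A i q' r) q =
        pd i (fun r' => lownerF qf A k q r') r +
          lownerF qf A i q r * deriv (fun q' => lownerF qf A k q' r) q := by
  intro i k hik r hr q hq
  have hrU : U ∈ nhds r := hU.mem_nhds hr
  -- differentiability of the coordinate functions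
  have hqfd : ∀ m, DifferentiableAt ℝ (qf m) r := fun m =>
    ((hqf m).differentiableOn (by norm_num)).differentiableAt hrU
  -- differentiability of r' ↦ ∂_m A r'
  have hAd : ∀ m, DifferentiableAt ℝ (fun r' => fderiv ℝ A r' (Pi.single m 1)) r := by
    intro m
    have h1 : ContDiffOn ℝ 1 (fderiv ℝ A) U := hA.fderiv_of_isOpen hU (by norm_num)
    have h2 : ContDiffOn ℝ 1 (fun r' => fderiv ℝ A r' (Pi.single m 1)) U :=
      (ContinuousLinearMap.apply ℝ ℝ ((Pi.single m 1 : Fin N → ℝ))).contDiff.comp_contDiffOn h1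
    exact (h2.differentiableOn (by norm_num)).differentiableAt hrU
  -- abbreviations
  set x := qf i r with hx
  set y := qf k r with hy
  set p := pd i A r with hp
  set s := pd k A r with hs
  have hxq : x - q ≠ 0 := sub_ne_zero.2 (fun h => (hq i) h.symm)
  have hyq : y - q ≠ 0 := sub_ne_zero.2 (fun h => (hq k) h.symm)
  have hxy : x - y ≠ 0 := sub_ne_zero.2 (hdist i k hik r hr)
  have hyx : y - x ≠ 0 := sub_ne_zero.2 (hdist k i (Ne.symm hik) r hr)
  -- mixed second derivative of A (both orders, via GT2 directly)
  have hMik : pd k (fun r' => fderiv ℝ A r' (Pi.single i 1)) r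
      = 2 * (1 + y * x) / (y - x) ^ 2 * s * p := hGT2 k i (Ne.symm hik) r hr
  have hMki : pd i (fun r' => fderiv ℝ A r' (Pi.single k 1)) r
      = 2 * (1 + x * y) / (x - y) ^ 2 * p * s := hGT2 i k hik r hr
  -- derivatives of the qf's
  have hBki : pd k (qf i) r = (1 + x ^ 2) / (y - x) * s := hGT1 k i (Ne.symm hik) r hr
  have hBik : pd i (qf k) r = (1 + y ^ 2) / (x - y) * p := hGT1 i k hik r hr
  -- compute the spatial derivatives of the F's
  have hdkFi : pd k (fun r' => lownerF qf A i q r') r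
      = ((1 + q ^ 2) * (2 * (1 + y * x) / (y - x) ^ 2 * s * p) * (x - q)
          - (1 + q ^ 2) * p * ((1 + x ^ 2) / (y - x) * s)) / (x - q) ^ 2 := by
    have := pd_div_formula k (1 + q ^ 2) q (hAd i) (hqfd i) hxq
    simp only [lownerF] at *
    rw [this, hMik, hBki]
    rfl
  have hdiFk : pd i (fun r' => lownerF qf A k q r') r
      = ((1 + q ^ 2) * (2 * (1 + x * y) / (x - y) ^ 2 * p * s) * (y - q)
          - (1 + q ^ 2) * s * ((1 + y ^ 2) / (x - y) * p)) / (y - q) ^ 2 := by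
    have := pd_div_formula i (1 + q ^ 2) q (hAd k) (hqfd k) hyq
    simp only [lownerF] at *
    rw [this, hMki, hBik]
    rfl
  -- the q-derivatives
  have hdqFi : deriv (fun q' => lownerF qf A i q' r) q
      = (2 * q * p * (x - q) + (1 + q ^ 2) * p) / (x - q) ^ 2 := by
    simp only [lownerF]
    exact deriv_lowner_q p x q hxq
  have hdqFk : deriv (fun q' => lownerF qf A k q' r) q
      = (2 * q * s * (y - q) + (1 + q ^ 2) * s) / (y - q) ^ 2 := by
    simp only [lownerF]
    exact deriv_lowner_q s y q hyq
  have hFi : lownerF qf A i q r = (1 + q ^ 2) * p / (x - q) := rfl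
  have hFk : lownerF qf A k q r = (1 + q ^ 2) * s / (y - q) := rfl
  rw [hdkFi, hdiFk, hdqFi, hdqFk, hFi, hFk]
  field_simp
  ring
end

section
/- Let a⁰, a¹ : Ω → ℝ be differentiable functions on an open set Ω ⊆ ℝ², with a¹ nonvanishing, satisfying the two-component system (N = 2 case of system (A)): ∂_t a⁰ = a¹·∂_x a¹ and ∂_t a¹ = a¹·∂_x a⁰ + 2(1−a⁰)·∂_x a¹. Define D := √((a⁰−1)² + (a¹)²) > 0 and r¹ := 1 + ((a⁰−1) − D)/2, r² := 1 + ((a⁰−1) + D)/2. Then r¹ and r² are Riemann invariants with the linearly degenerate diagonal dynamics: ∂_t r¹ = 2(1−r²)·∂_x r¹ and ∂_t r² = 2(1−r¹)·∂_x r² on Ω. Moreover a⁰ = r¹ + r² − 1 and (a¹)² = −4(r¹−1)(r²−1). -/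
set_option maxHeartbeats 1000000 in
/-- N = 2: for solutions `(a⁰, a¹)` of the two-component system with `a¹`
nonvanishing, the functions `r¹ = 1 + ((a⁰−1) − D)/2`, `r² = 1 + ((a⁰−1) + D)/2` with
`D = √((a⁰−1)² + (a¹)²) > 0` are Riemann invariants with linearly degenerate diagonal
dynamics `r¹_t = 2(1−r²)r¹_x`, `r²_t = 2(1−r¹)r²_x`; moreover `a⁰ = r¹ + r² − 1` and
`(a¹)² = −4(r¹−1)(r²−1)`. -/
theorem statement7 (Ω : Set (ℝ × ℝ)) (hΩ : IsOpen Ω)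
    (a0 a1 : ℝ × ℝ → ℝ)
    (ha0 : DifferentiableOn ℝ a0 Ω) (ha1 : DifferentiableOn ℝ a1 Ω)
    (hnz : ∀ z ∈ Ω, a1 z ≠ 0)
    (heq0 : ∀ z ∈ Ω, pdt a0 z = a1 z * pdx a1 z)
    (heq1 : ∀ z ∈ Ω, pdt a1 z = a1 z * pdx a0 z + 2 * (1 - a0 z) * pdx a1 z)
    (D r1 r2 : ℝ × ℝ → ℝ)
    (hD : ∀ z, D z = Real.sqrt ((a0 z - 1) ^ 2 + (a1 z) ^ 2))
    (hr1 : ∀ z, r1 z = 1 + ((a0 z - 1) - D z) / 2)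
    (hr2 : ∀ z, r2 z = 1 + ((a0 z - 1) + D z) / 2) :
    ∀ z ∈ Ω,
      0 < D z ∧
      pdt r1 z = 2 * (1 - r2 z) * pdx r1 z ∧
      pdt r2 z = 2 * (1 - r1 z) * pdx r2 z ∧
      a0 z = r1 z + r2 z - 1 ∧
      (a1 z) ^ 2 = -4 * (r1 z - 1) * (r2 z - 1) := by
  intro z hz
  have hmem := hΩ.mem_nhds hz
  have h0 : DifferentiableAt ℝ a0 z := (ha0 z hz).differentiableAt hmem
  have h1 : DifferentiableAt ℝ a1 z := (ha1 z hz).differentiableAt hmem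
  set u : ℝ := a0 z - 1 with hu
  set v : ℝ := a1 z with hv
  have hvne : v ≠ 0 := hnz z hz
  have hqpos : (0:ℝ) < u ^ 2 + v ^ 2 := by positivity
  have hDz : D z = Real.sqrt (u ^ 2 + v ^ 2) := hD z
  have hDpos : 0 < D z := by rw [hDz]; exact Real.sqrt_pos.mpr hqpos
  have hD2 : D z ^ 2 = u ^ 2 + v ^ 2 := by rw [hDz]; exact Real.sq_sqrt hqpos.le
  set L0 := fderiv ℝ a0 z with hL0
  set L1 := fderiv ℝ a1 z with hL1
  have hf0 : HasFDerivAt a0 L0 z := h0.hasFDerivAt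
  have hf1 : HasFDerivAt a1 L1 z := h1.hasFDerivAt
  have hA : HasFDerivAt (fun w => a0 w - 1) L0 z := hf0.sub_const 1
  have hg : HasFDerivAt (fun w => (a0 w - 1) ^ 2 + (a1 w) ^ 2)
      ((u • L0 + u • L0) + (v • L1 + v • L1)) z := by
    have h2 : HasFDerivAt (fun w => (a0 w - 1) ^ 2) (u • L0 + u • L0) z := by
      have := hA.mul hA
      simpa [sq, Pi.mul_def, hu] using this
    have h3 : HasFDerivAt (fun w => (a1 w) ^ 2) (v • L1 + v • L1) z := by
      have := hf1.mul hf1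
      simpa [sq, Pi.mul_def, hv] using this
    exact h2.add h3
  have hs : HasDerivAt Real.sqrt (1 / (2 * Real.sqrt (u ^ 2 + v ^ 2))) (u ^ 2 + v ^ 2) :=
    Real.hasDerivAt_sqrt hqpos.ne'
  have hDfun : D = fun w => Real.sqrt ((a0 w - 1) ^ 2 + (a1 w) ^ 2) := funext hD
  have hfD : HasFDerivAt D
      ((1 / (2 * D z)) • ((u • L0 + u • L0) + (v • L1 + v • L1))) z := by
    rw [hDz, hDfun]
    exact hs.comp_hasFDerivAt z hg
  set LD := (1 / (2 * D z)) • ((u • L0 + u • L0) + (v • L1 + v • L1)) with hLD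
  have hfr1 : HasFDerivAt r1 ((1 / 2 : ℝ) • (L0 - LD)) z := by
    have : HasFDerivAt (fun w => 1 + ((a0 w - 1) - D w) / 2)
        ((1 / 2 : ℝ) • (L0 - LD)) z := by
      have := ((hA.sub hfD).const_smul (1 / 2 : ℝ)).const_add 1
      exact this.congr_of_eventuallyEq (Filter.Eventually.of_forall fun w => by
        simp only [Pi.smul_apply, Pi.sub_apply, Pi.add_apply, smul_eq_mul]; ring)
    exact (funext hr1 : r1 = _) ▸ this
  have hfr2 : HasFDerivAt r2 ((1 / 2 : ℝ) • (L0 + LD)) z := by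
    have : HasFDerivAt (fun w => 1 + ((a0 w - 1) + D w) / 2)
        ((1 / 2 : ℝ) • (L0 + LD)) z := by
      have := ((hA.add hfD).const_smul (1 / 2 : ℝ)).const_add 1
      exact this.congr_of_eventuallyEq (Filter.Eventually.of_forall fun w => by
        simp only [Pi.smul_apply, Pi.sub_apply, Pi.add_apply, smul_eq_mul]; ring)
    exact (funext hr2 : r2 = _) ▸ this
  set Ax := L0 (1, 0) with hAx
  set At := L0 (0, 1) with hAt
  set Bx := L1 (1, 0) with hBx
  set Bt := L1 (0, 1) with hBt
  have e0 : At = v * Bx := heq0 z hz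
  have e1 : Bt = v * Ax + 2 * (1 - a0 z) * Bx := heq1 z hz
  have pr1x : pdx r1 z = (1 / 2) * (Ax - (1 / (2 * D z)) * ((u * Ax + u * Ax) + (v * Bx + v * Bx))) := by
    rw [pdx, hfr1.fderiv]
    simp only [hLD, ContinuousLinearMap.coe_smul', Pi.smul_apply,
      ContinuousLinearMap.sub_apply, ContinuousLinearMap.add_apply, smul_eq_mul]
    try ring
  have pr1t : pdt r1 z = (1 / 2) * (At - (1 / (2 * D z)) * ((u * At + u * At) + (v * Bt + v * Bt))) := by
    rw [pdt, hfr1.fderiv]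
    simp only [hLD, ContinuousLinearMap.coe_smul', Pi.smul_apply,
      ContinuousLinearMap.sub_apply, ContinuousLinearMap.add_apply, smul_eq_mul]
    try ring
  have pr2x : pdx r2 z = (1 / 2) * (Ax + (1 / (2 * D z)) * ((u * Ax + u * Ax) + (v * Bx + v * Bx))) := by
    rw [pdx, hfr2.fderiv]
    simp only [hLD, ContinuousLinearMap.coe_smul', Pi.smul_apply,
      ContinuousLinearMap.sub_apply, ContinuousLinearMap.add_apply, smul_eq_mul]
    try ring
  have pr2t : pdt r2 z = (1 / 2) * (At + (1 / (2 * D z)) * ((u * At + u * At) + (v * Bt + v * Bt))) := by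
    rw [pdt, hfr2.fderiv]
    simp only [hLD, ContinuousLinearMap.coe_smul', Pi.smul_apply,
      ContinuousLinearMap.sub_apply, ContinuousLinearMap.add_apply, smul_eq_mul]
    try ring
  have ha0u : a0 z = u + 1 := by rw [hu]; ring
  refine ⟨hDpos, ?_, ?_, ?_, ?_⟩
  · rw [pr1x, pr1t, hr2 z, e0, e1, ha0u]
    field_simp
    linear_combination (2 * Ax) * hD2
  · rw [pr2x, pr2t, hr1 z, e0, e1, ha0u]
    field_simp
    linear_combination (-2 * Ax) * hD2
  · rw [hr1 z, hr2 z]; ring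
  · rw [hr1 z, hr2 z, ha0u]
    linear_combination -hD2
end

section
/- Let r¹, r² : Ω → ℝ be differentiable functions on an open set Ω ⊆ ℝ² satisfying the linearly degenerate diagonal system ∂_t r¹ = 2(1−r²)·∂_x r¹ and ∂_t r² = 2(1−r¹)·∂_x r², and suppose r¹ < 1 < r² on Ω. Define a⁰ := r¹ + r² − 1 and a¹ := 2·√((1−r¹)(r²−1)) (so that (a¹)² = −4(r¹−1)(r²−1) and a¹ > 0). Then (a⁰, a¹) satisfies the two-component system ∂_t a⁰ = a¹·∂_x a¹ and ∂_t a¹ = a¹·∂_x a⁰ + 2(1−a⁰)·∂_x a¹ on Ω. -/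
set_option maxHeartbeats 1000000 in
/-- solutions `r¹ < 1 < r²` of the linearly degenerate diagonal system
`r¹_t = 2(1−r²)r¹_x`, `r²_t = 2(1−r¹)r²_x` yield, via `a⁰ = r¹ + r² − 1` and
`a¹ = 2√((1−r¹)(r²−1))` (so that `(a¹)² = −4(r¹−1)(r²−1)` and `a¹ > 0`), a solution of
the two-component system `a⁰_t = a¹a¹_x`, `a¹_t = a¹a⁰_x + 2(1−a⁰)a¹_x`. -/
theorem statement8 (Ω : Set (ℝ × ℝ)) (hΩ : IsOpen Ω)
    (r1 r2 : ℝ × ℝ → ℝ)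
    (hr1 : DifferentiableOn ℝ r1 Ω) (hr2 : DifferentiableOn ℝ r2 Ω)
    (horder : ∀ z ∈ Ω, r1 z < 1 ∧ 1 < r2 z)
    (heq1 : ∀ z ∈ Ω, pdt r1 z = 2 * (1 - r2 z) * pdx r1 z)
    (heq2 : ∀ z ∈ Ω, pdt r2 z = 2 * (1 - r1 z) * pdx r2 z)
    (a0 a1 : ℝ × ℝ → ℝ)
    (ha0 : ∀ z, a0 z = r1 z + r2 z - 1)
    (ha1 : ∀ z, a1 z = 2 * Real.sqrt ((1 - r1 z) * (r2 z - 1))) :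
    ∀ z ∈ Ω,
      (a1 z) ^ 2 = -4 * (r1 z - 1) * (r2 z - 1) ∧
      0 < a1 z ∧
      pdt a0 z = a1 z * pdx a1 z ∧
      pdt a1 z = a1 z * pdx a0 z + 2 * (1 - a0 z) * pdx a1 z := by

  intro z hz
  obtain ⟨h1, h2⟩ := horder z hz
  have hzΩ : Ω ∈ nhds z := hΩ.mem_nhds hz
  have hd1 : DifferentiableAt ℝ r1 z := (hr1 z hz).differentiableAt hzΩ
  have hd2 : DifferentiableAt ℝ r2 z := (hr2 z hz).differentiableAt hzΩ
  set D1 := fderiv ℝ r1 z with hD1def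
  set D2 := fderiv ℝ r2 z with hD2def
  have hD1 : HasFDerivAt r1 D1 z := hd1.hasFDerivAt
  have hD2 : HasFDerivAt r2 D2 z := hd2.hasFDerivAt
  have hu : 0 < 1 - r1 z := by linarith
  have hv : 0 < r2 z - 1 := by linarith
  have hg : 0 < (1 - r1 z) * (r2 z - 1) := mul_pos hu hv
  set s := Real.sqrt ((1 - r1 z) * (r2 z - 1)) with hsdef
  have hs : 0 < s := Real.sqrt_pos.2 hg
  have hs2 : s ^ 2 = (1 - r1 z) * (r2 z - 1) := Real.sq_sqrt hg.le
  -- derivative of a0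
  have ha0fun : a0 = fun w => r1 w + r2 w - 1 := funext ha0
  have hA0 : HasFDerivAt a0 (D1 + D2) z := by
    rw [ha0fun]
    simpa using (hD1.add hD2).sub_const 1
  -- derivative of the product g
  have hf1 : HasFDerivAt (fun w => 1 - r1 w) (-D1) z := by
    simpa using hD1.const_sub (1:ℝ)
  have hf2 : HasFDerivAt (fun w => r2 w - 1) D2 z := by
    simpa using hD2.sub_const 1
  have hDg : HasFDerivAt (fun w => (1 - r1 w) * (r2 w - 1))
      ((1 - r1 z) • D2 + (r2 z - 1) • (-D1)) z := hf1.mul hf2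
  have hsq : HasDerivAt Real.sqrt (1 / (2 * s)) ((1 - r1 z) * (r2 z - 1)) := by
    simpa [hsdef] using Real.hasDerivAt_sqrt hg.ne'
  have hcomp : HasFDerivAt (fun w => Real.sqrt ((1 - r1 w) * (r2 w - 1)))
      ((1 / (2 * s)) • ((1 - r1 z) • D2 + (r2 z - 1) • (-D1))) z :=
    hsq.comp_hasFDerivAt z hDg
  have ha1fun : a1 = fun w => 2 * Real.sqrt ((1 - r1 w) * (r2 w - 1)) := funext ha1
  have hA1 : HasFDerivAt a1
      ((2:ℝ) • ((1 / (2 * s)) • ((1 - r1 z) • D2 + (r2 z - 1) • (-D1)))) z := by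
    rw [ha1fun]
    exact hcomp.const_mul 2
  set p := D1 (1, 0) with hp
  set q := D2 (1, 0) with hq
  -- values of partial derivatives
  have hpdx0 : pdx a0 z = p + q := by
    simp [pdx, hA0.fderiv, hp, hq]
  have hpdt0 : pdt a0 z = D1 (0, 1) + D2 (0, 1) := by
    simp [pdt, hA0.fderiv]
  have hpdx1 : pdx a1 z = 2 * ((1 / (2 * s)) * ((1 - r1 z) * q + (r2 z - 1) * (-p))) := by
    simp [pdx, hA1.fderiv, hp, hq]; ring
  have hpdt1 : pdt a1 z =
      2 * ((1 / (2 * s)) * ((1 - r1 z) * (D2 (0, 1)) + (r2 z - 1) * (-(D1 (0, 1))))) := by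
    simp [pdt, hA1.fderiv]; ring
  have he1 : D1 (0, 1) = 2 * (1 - r2 z) * p := by
    simpa [pdt, pdx, hD1def, hp] using heq1 z hz
  have he2 : D2 (0, 1) = 2 * (1 - r1 z) * q := by
    simpa [pdt, pdx, hD2def, hq] using heq2 z hz
  have ha1z : a1 z = 2 * s := ha1 z
  have hX : s * pdx a1 z = (1 - r1 z) * q - (r2 z - 1) * p := by
    rw [hpdx1]; field_simp; ring
  have hT : s * pdt a1 z =
      (1 - r1 z) * (2 * (1 - r1 z) * q) - (r2 z - 1) * (2 * (1 - r2 z) * p) := by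
    rw [hpdt1, he1, he2]; field_simp; ring
  refine ⟨by rw [ha1z]; nlinarith [hs2], by rw [ha1z]; linarith, ?_, ?_⟩
  · refine mul_left_cancel₀ hs.ne' ?_
    rw [hpdt0, he1, he2, ha1z]
    linear_combination (-2 * s) * hX
  · refine mul_left_cancel₀ hs.ne' ?_
    rw [hpdx0, ha1z, ha0 z]
    linear_combination hT - 2 * (2 - r1 z - r2 z) * hX - 2 * (p + q) * hs2
end

section
/- Let β, γ : ℝ → ℝ be twice differentiable, and let u, v : Ω → ℝ be differentiable functions on an open set Ω ⊆ ℝ² with coordinates (x,t) satisfying the implicit relations t = β′(u(x,t)) + γ′(v(x,t)) and x = β(u(x,t)) − u(x,t)·β′(u(x,t)) + γ(v(x,t)) − v(x,t)·γ′(v(x,t)) at every point of Ω. Assume moreover that β″(u(x,t)) ≠ 0, γ″(v(x,t)) ≠ 0, and u(x,t) ≠ v(x,t) on Ω. Then u and v solve the linearly degenerate system ∂_t u = v·∂_x u and ∂_t v = u·∂_x v on Ω. -/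
/-- the implicit formulas `t = β′(u) + γ′(v)`,
`x = β(u) − uβ′(u) + γ(v) − vγ′(v)` (with `β″(u) ≠ 0`, `γ″(v) ≠ 0`, `u ≠ v`) give
solutions of the linearly degenerate system `u_t = v·u_x`, `v_t = u·v_x`. -/
theorem statement9 (β γ : ℝ → ℝ)
    (hβ : Differentiable ℝ β) (hβ' : Differentiable ℝ (deriv β))
    (hγ : Differentiable ℝ γ) (hγ' : Differentiable ℝ (deriv γ))
    (Ω : Set (ℝ × ℝ)) (hΩ : IsOpen Ω)
    (u v : ℝ × ℝ → ℝ)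
    (hu : DifferentiableOn ℝ u Ω) (hv : DifferentiableOn ℝ v Ω)
    (hrel_t : ∀ z ∈ Ω, z.2 = deriv β (u z) + deriv γ (v z))
    (hrel_x : ∀ z ∈ Ω,
      z.1 = β (u z) - u z * deriv β (u z) + γ (v z) - v z * deriv γ (v z))
    (hβ'' : ∀ z ∈ Ω, deriv (deriv β) (u z) ≠ 0)
    (hγ'' : ∀ z ∈ Ω, deriv (deriv γ) (v z) ≠ 0)
    (huv : ∀ z ∈ Ω, u z ≠ v z) :
    ∀ z ∈ Ω, pdt u z = v z * pdx u z ∧ pdt v z = u z * pdx v z := by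
  intro z hz
  have hzU : Ω ∈ nhds z := hΩ.mem_nhds hz
  have huz : DifferentiableAt ℝ u z := (hu z hz).differentiableAt hzU
  have hvz : DifferentiableAt ℝ v z := (hv z hz).differentiableAt hzU
  set Du := fderiv ℝ u z with hDu
  set Dv := fderiv ℝ v z with hDv
  have hu_at : HasFDerivAt u Du z := huz.hasFDerivAt
  have hv_at : HasFDerivAt v Dv z := hvz.hasFDerivAt
  set B := deriv (deriv β) (u z) with hB
  set C := deriv (deriv γ) (v z) with hC
  -- t-relation
  have h1 : HasFDerivAt (fun w => deriv β (u w) + deriv γ (v w))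
      (B • Du + C • Dv) z :=
    (((hβ' (u z)).hasDerivAt.comp_hasFDerivAt z hu_at).add
      ((hγ' (v z)).hasDerivAt.comp_hasFDerivAt z hv_at))
  have h1' : HasFDerivAt (fun w => deriv β (u w) + deriv γ (v w))
      (ContinuousLinearMap.snd ℝ ℝ ℝ) z := by
    refine hasFDerivAt_snd.congr_of_eventuallyEq ?_
    exact Filter.eventuallyEq_of_mem hzU (fun w hw => (hrel_t w hw).symm.symm ▸
      (hrel_t w hw).symm)
  have hmap1 : B • Du + C • Dv = ContinuousLinearMap.snd ℝ ℝ ℝ := h1.unique h1'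
  -- x-relation
  have hfβ : HasDerivAt (fun s => β s - s * deriv β s) (-(u z * B)) (u z) := by
    have := (hβ (u z)).hasDerivAt.sub
      ((hasDerivAt_id (u z)).mul (hβ' (u z)).hasDerivAt)
    refine this.congr_deriv ?_
    simp [hB]
  have hfγ : HasDerivAt (fun s => γ s - s * deriv γ s) (-(v z * C)) (v z) := by
    have := (hγ (v z)).hasDerivAt.sub
      ((hasDerivAt_id (v z)).mul (hγ' (v z)).hasDerivAt)
    refine this.congr_deriv ?_
    simp [hC]
  have h2 : HasFDerivAt
      (fun w => (β (u w) - u w * deriv β (u w)) + (γ (v w) - v w * deriv γ (v w)))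
      ((-(u z * B)) • Du + (-(v z * C)) • Dv) z :=
    ((hfβ.comp_hasFDerivAt z hu_at).add (hfγ.comp_hasFDerivAt z hv_at))
  have h2' : HasFDerivAt
      (fun w => (β (u w) - u w * deriv β (u w)) + (γ (v w) - v w * deriv γ (v w)))
      (ContinuousLinearMap.fst ℝ ℝ ℝ) z := by
    refine hasFDerivAt_fst.congr_of_eventuallyEq ?_
    refine Filter.eventuallyEq_of_mem hzU (fun w hw => ?_)
    have := hrel_x w hw
    simp only [this]
    ring
  have hmap2 : (-(u z * B)) • Du + (-(v z * C)) • Dv = ContinuousLinearMap.fst ℝ ℝ ℝ :=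
    h2.unique h2'
  -- evaluate at basis vectors
  have e1 : B * Du (1, 0) + C * Dv (1, 0) = 0 := by
    have := DFunLike.congr_fun hmap1 ((1 : ℝ), (0 : ℝ))
    simpa using this
  have e2 : B * Du (0, 1) + C * Dv (0, 1) = 1 := by
    have := DFunLike.congr_fun hmap1 ((0 : ℝ), (1 : ℝ))
    simpa using this
  have e3 : -(u z * B) * Du (1, 0) + -(v z * C) * Dv (1, 0) = 1 := by
    have := DFunLike.congr_fun hmap2 ((1 : ℝ), (0 : ℝ))
    simpa using this
  have e4 : -(u z * B) * Du (0, 1) + -(v z * C) * Dv (0, 1) = 0 := by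
    have := DFunLike.congr_fun hmap2 ((0 : ℝ), (1 : ℝ))
    simpa using this
  -- solve the linear system
  have hBne : B ≠ 0 := hβ'' z hz
  have hCne : C ≠ 0 := hγ'' z hz
  have hvu : v z - u z ≠ 0 := sub_ne_zero.mpr (Ne.symm (huv z hz))
  have huvne : u z - v z ≠ 0 := sub_ne_zero.mpr (huv z hz)
  have k1 : (v z - u z) * (B * Du (1, 0)) = 1 := by linear_combination e3 + v z * e1
  have k2 : (v z - u z) * (B * Du (0, 1)) = v z := by linear_combination e4 + v z * e2
  have k3 : (u z - v z) * (C * Dv (1, 0)) = 1 := by linear_combination e3 + u z * e1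
  have k4 : (u z - v z) * (C * Dv (0, 1)) = u z := by linear_combination e4 + u z * e2
  constructor
  · have key : (v z - u z) * (B * Du (0, 1)) =
        (v z - u z) * (B * (v z * Du (1, 0))) := by
      rw [k2]; linear_combination -(v z) * k1
    have := mul_left_cancel₀ hvu key
    have := mul_left_cancel₀ hBne this
    simpa only [pdt, pdx, ← hDu] using this
  · have key : (u z - v z) * (C * Dv (0, 1)) =
        (u z - v z) * (C * (u z * Dv (1, 0))) := by
      rw [k4]; linear_combination -(u z) * k3
    have := mul_left_cancel₀ huvne key
    have := mul_left_cancel₀ hCne this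
    simpa only [pdt, pdx, ← hDv] using this
end

section
/- Let N ≥ 2 and let b¹,…,b^N : Ω → ℝ be differentiable functions on an open set Ω ⊆ ℝ² satisfying system (B). Define a⁰,…,a^{N-1} : Ω → ℝ as the coefficients of the monic polynomial with roots b¹,…,b^N, i.e. q^N + Σ_{k=0}^{N-1} a^k(x,t)·q^k = ∏_{m=1}^{N}(q − b^m(x,t)) for all q (so a^k = (−1)^{N−k}·e_{N−k}(b¹,…,b^N), where e_j is the j-th elementary symmetric polynomial, and a^{N-1} = −Σ b^m). Then a⁰,…,a^{N-1} satisfy system (A) with a^N ≡ 1. -/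
/-- System (B): the symmetric form of the hydrodynamic type system in the root
variables `b¹, …, b^N`. -/
def SystemB (N : ℕ) (Ω : Set (ℝ × ℝ)) (b : Fin N → ℝ × ℝ → ℝ) : Prop :=
  ∀ z ∈ Ω, ∀ k,
    pdt (b k) z =
      (1 + (b k z) ^ 2) * ∑ m, pdx (b m) z - (∑ n, b n z) * b k z * pdx (b k) z

/-- Coefficient of a generating polynomial. -/
lemma coeffSum (n j : ℕ) (c : ℕ → ℝ) :
    (∑ k ∈ Finset.range n, Polynomial.C (c k) * Polynomial.X ^ k).coeff j
      = if j < n then c j else 0 := by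
  simp [Polynomial.finset_sum_coeff, Polynomial.coeff_C_mul, Polynomial.coeff_X_pow,
    mul_ite, Finset.sum_ite_eq, Finset.mem_range]

/-- Derivative of a finset product of polynomials. -/
lemma derivFinsetProd {ι : Type*} [DecidableEq ι] (s : Finset ι) (f : ι → Polynomial ℝ) :
    Polynomial.derivative (∏ i ∈ s, f i)
      = ∑ i ∈ s, (∏ j ∈ s.erase i, f j) * Polynomial.derivative (f i) := by
  classical
  rw [Finset.prod_eq_multiset_prod, Polynomial.derivative_prod, Finset.sum_eq_multiset_sum]
  congr 1

lemma coeff_one_add_X_sq_mul (p : Polynomial ℝ) (j : ℕ) :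
    ((1 + Polynomial.X ^ 2) * p).coeff j
      = p.coeff j + if 2 ≤ j then p.coeff (j - 2) else 0 := by
  rw [add_mul, one_mul, Polynomial.coeff_add, (Polynomial.commute_X_pow p 2).eq,
    Polynomial.coeff_mul_X_pow']

lemma coeff_X_mul' (p : Polynomial ℝ) (j : ℕ) :
    (Polynomial.X * p).coeff j = if 1 ≤ j then p.coeff (j - 1) else 0 := by
  rw [(Polynomial.commute_X p).eq, ← pow_one (Polynomial.X : Polynomial ℝ),
    Polynomial.coeff_mul_X_pow']

/-- if `b¹, …, b^N` solve system (B) and `a⁰, …, a^{N-1}` are the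
coefficients of the monic polynomial with roots `b¹, …, b^N`, i.e.
`q^N + Σ_{k<N} a^k q^k = ∏_m (q − b^m)` for all `q` (with `a^N ≡ 1`), then the `a^k`
satisfy system (A). -/
theorem statement11 (N : ℕ) (hN : 2 ≤ N) (Ω : Set (ℝ × ℝ)) (hΩ : IsOpen Ω)
    (b : Fin N → ℝ × ℝ → ℝ)
    (hb : ∀ k, DifferentiableOn ℝ (b k) Ω)
    (hB : SystemB N Ω b)
    (a : ℕ → ℝ × ℝ → ℝ)
    (ha : ∀ z, ∀ q : ℝ,
      q ^ N + ∑ k ∈ Finset.range N, a k z * q ^ k = ∏ m, (q - b m z))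
    (haN : ∀ z, a N z = 1) :
    SystemA N Ω a := by
  classical
  intro z hz
  have hbd : ∀ m, DifferentiableAt ℝ (b m) z :=
    fun m => (hb m).differentiableAt (hΩ.mem_nhds hz)
  -- polynomial identity pointwise
  have hpoly : ∀ w : ℝ × ℝ,
      (Polynomial.X ^ N + ∑ k ∈ Finset.range N, Polynomial.C (a k w) * Polynomial.X ^ k)
        = ∏ m, (Polynomial.X - Polynomial.C (b m w)) := by
    intro w
    apply Polynomial.funext
    intro r
    simpa [Polynomial.eval_finset_sum, Polynomial.eval_prod] using ha w r
  -- coefficient description of a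
  have hcoeff : ∀ (w : ℝ × ℝ) (k : ℕ), k < N →
      a k w = (∏ m, (Polynomial.X - Polynomial.C (b m w))).coeff k := by
    intro w k hk
    rw [← hpoly w]
    rw [Polynomial.coeff_add, Polynomial.coeff_X_pow, coeffSum]
    simp [hk, Nat.ne_of_lt hk]
  -- esymm expression of a
  have haesymm : ∀ k, k < N → a k = fun w =>
      (-1 : ℝ) ^ (N - k) * ∑ t ∈ Finset.powersetCard (N - k) Finset.univ, ∏ i ∈ t, b i w := by
    intro k hk
    funext w
    rw [hcoeff w k hk]
    have h1 : (∏ m, (Polynomial.X - Polynomial.C (b m w)))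
        = (Multiset.map (fun r : ℝ => Polynomial.X - Polynomial.C r)
            (Multiset.map (fun m => b m w) Finset.univ.val)).prod := by
      rw [Multiset.map_map, Finset.prod_eq_multiset_prod]
      rfl
    have hcard : Multiset.card (Multiset.map (fun m => b m w) Finset.univ.val) = N := by
      simp
    rw [h1, Multiset.prod_X_sub_C_coeff _ (by rw [hcard]; omega), hcard,
      Finset.esymm_map_val]
  -- differentiability of a k
  have hdiffA : ∀ k, k < N → DifferentiableAt ℝ (a k) z := by
    intro k hk
    rw [haesymm k hk]
    apply DifferentiableAt.const_mul
    apply DifferentiableAt.fun_sum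
    intro t _
    exact (HasFDerivAt.finset_prod (fun i _ => (hbd i).hasFDerivAt)).differentiableAt
  -- key derivative identity
  have hkey : ∀ (v : ℝ × ℝ) (q : ℝ),
      (∑ k ∈ Finset.range N, fderiv ℝ (a k) z v * q ^ k)
        = ∑ m, (∏ j ∈ Finset.univ.erase m, (q - b j z)) * (-(fderiv ℝ (b m) z v)) := by
    intro v q
    have hL : HasFDerivAt (fun w => q ^ N + ∑ k ∈ Finset.range N, a k w * q ^ k)
        (∑ k ∈ Finset.range N, q ^ k • fderiv ℝ (a k) z) z := by
      apply HasFDerivAt.const_add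
      refine HasFDerivAt.fun_sum fun k hk => ?_
      exact HasFDerivAt.mul_const ((hdiffA k (Finset.mem_range.mp hk)).hasFDerivAt) (q ^ k)
    have hR : HasFDerivAt (fun w => ∏ m, (q - b m w))
        (∑ m, (∏ j ∈ Finset.univ.erase m, (q - b j z)) • (-(fderiv ℝ (b m) z))) z := by
      refine HasFDerivAt.finset_prod fun m _ => ?_
      exact (hbd m).hasFDerivAt.const_sub q
    have hfun : (fun w => q ^ N + ∑ k ∈ Finset.range N, a k w * q ^ k)
        = fun w => ∏ m, (q - b m w) := funext fun w => ha w q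
    have huniq := hL.unique (hfun ▸ hR)
    have := congrArg (fun L : (ℝ × ℝ) →L[ℝ] ℝ => L v) huniq
    simpa [ContinuousLinearMap.sum_apply, mul_comm] using this
  -- generating function identities for pdx and pdt
  have hDa : ∀ q : ℝ, (∑ k ∈ Finset.range N, pdx (a k) z * q ^ k)
      = ∑ m, (∏ j ∈ Finset.univ.erase m, (q - b j z)) * (-(pdx (b m) z)) :=
    fun q => hkey (1, 0) q
  have hDt : ∀ q : ℝ, (∑ k ∈ Finset.range N, pdt (a k) z * q ^ k)
      = ∑ m, (∏ j ∈ Finset.univ.erase m, (q - b j z)) * (-(pdt (b m) z)) :=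
    fun q => hkey (0, 1) q
  -- polynomial setup
  set P : Polynomial ℝ := ∏ m, (Polynomial.X - Polynomial.C (b m z)) with hPdef
  set Pm : Fin N → Polynomial ℝ :=
    fun m => ∏ j ∈ Finset.univ.erase m, (Polynomial.X - Polynomial.C (b j z)) with hPmdef
  have hP : P = ∑ k ∈ Finset.range (N + 1), Polynomial.C (a k z) * Polynomial.X ^ k := by
    rw [hPdef, ← hpoly z, Finset.sum_range_succ, haN z, Polynomial.C_1, one_mul, add_comm]
  have hPm : ∀ m, (Polynomial.X - Polynomial.C (b m z)) * Pm m = P := by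
    intro m
    simp only [hPmdef, hPdef]
    exact Finset.mul_prod_erase Finset.univ
      (fun j => Polynomial.X - Polynomial.C (b j z)) (Finset.mem_univ m)
  have hdP : Polynomial.derivative P = ∑ m, Pm m := by
    rw [hPdef, derivFinsetProd]
    simp
    rfl
  have hDaP : (∑ k ∈ Finset.range N, Polynomial.C (pdx (a k) z) * Polynomial.X ^ k)
      = ∑ m, Polynomial.C (-(pdx (b m) z)) * Pm m := by
    apply Polynomial.funext
    intro r
    have h := hDa r
    simp only [Polynomial.eval_finset_sum, Polynomial.eval_mul, Polynomial.eval_C,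
      Polynomial.eval_pow, Polynomial.eval_X, hPmdef, Polynomial.eval_prod,
      Polynomial.eval_sub]
    rw [h]
    exact Finset.sum_congr rfl fun m _ => by ring
  have hDtP : (∑ k ∈ Finset.range N, Polynomial.C (pdt (a k) z) * Polynomial.X ^ k)
      = ∑ m, Polynomial.C (-(pdt (b m) z)) * Pm m := by
    apply Polynomial.funext
    intro r
    have h := hDt r
    simp only [Polynomial.eval_finset_sum, Polynomial.eval_mul, Polynomial.eval_C,
      Polynomial.eval_pow, Polynomial.eval_X, hPmdef, Polynomial.eval_prod,
      Polynomial.eval_sub]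
    rw [h]
    exact Finset.sum_congr rfl fun m _ => by ring
  -- B-system values at z
  have htB : ∀ m, pdt (b m) z = (1 + (b m z) ^ 2) * (∑ n, pdx (b n) z)
      - (∑ n, b n z) * b m z * pdx (b m) z := hB z hz
  -- pointwise product identities
  have hXPm : ∀ m, Polynomial.C (b m z) * Pm m = Polynomial.X * Pm m - P := by
    intro m
    linear_combination (-1 : Polynomial ℝ) * hPm m
  have e1 : ∑ m, Polynomial.C (b m z) * Pm m
      = Polynomial.X * Polynomial.derivative P - Polynomial.C (N : ℝ) * P := by
    calc ∑ m, Polynomial.C (b m z) * Pm m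
        = ∑ m : Fin N, (Polynomial.X * Pm m - P) :=
          Finset.sum_congr rfl fun m _ => hXPm m
      _ = Polynomial.X * (∑ m, Pm m) - (N : ℕ) • P := by
          rw [Finset.sum_sub_distrib, Finset.mul_sum, Finset.sum_const, Finset.card_univ,
            Fintype.card_fin]
      _ = _ := by rw [← hdP, nsmul_eq_mul, map_natCast]
  have e2 : ∑ m, Polynomial.C (b m z) ^ 2 * Pm m
      = Polynomial.X ^ 2 * Polynomial.derivative P
        - Polynomial.C (N : ℝ) * (Polynomial.X * P) - Polynomial.C (∑ n, b n z) * P := by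
    have h2 : ∀ m : Fin N, Polynomial.C (b m z) ^ 2 * Pm m
        = Polynomial.X * (Polynomial.C (b m z) * Pm m) - Polynomial.C (b m z) * P := by
      intro m
      linear_combination Polynomial.C (b m z) * hXPm m
    calc ∑ m, Polynomial.C (b m z) ^ 2 * Pm m
        = ∑ m : Fin N,
            (Polynomial.X * (Polynomial.C (b m z) * Pm m) - Polynomial.C (b m z) * P) :=
          Finset.sum_congr rfl fun m _ => h2 m
      _ = Polynomial.X * (∑ m, Polynomial.C (b m z) * Pm m)
            - (∑ m, Polynomial.C (b m z)) * P := by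
          rw [Finset.sum_sub_distrib, Finset.mul_sum, Finset.sum_mul]
      _ = _ := by rw [e1, ← map_sum]; ring
  have hsPm : ∑ m, Polynomial.C (pdx (b m) z) * Pm m
      = -(∑ k ∈ Finset.range N, Polynomial.C (pdx (a k) z) * Polynomial.X ^ k) := by
    rw [hDaP]
    simp [map_neg, neg_mul]
  have e3 : ∑ m, Polynomial.C (b m z * pdx (b m) z) * Pm m
      = -(Polynomial.X * (∑ k ∈ Finset.range N, Polynomial.C (pdx (a k) z) * Polynomial.X ^ k))
        - Polynomial.C (∑ n, pdx (b n) z) * P := by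
    have h3 : ∀ m : Fin N, Polynomial.C (b m z * pdx (b m) z) * Pm m
        = Polynomial.X * (Polynomial.C (pdx (b m) z) * Pm m)
          - Polynomial.C (pdx (b m) z) * P := by
      intro m
      rw [map_mul]
      linear_combination Polynomial.C (pdx (b m) z) * hXPm m
    calc ∑ m, Polynomial.C (b m z * pdx (b m) z) * Pm m
        = ∑ m : Fin N, (Polynomial.X * (Polynomial.C (pdx (b m) z) * Pm m)
            - Polynomial.C (pdx (b m) z) * P) :=
          Finset.sum_congr rfl fun m _ => h3 m
      _ = Polynomial.X * (∑ m, Polynomial.C (pdx (b m) z) * Pm m)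
            - (∑ m, Polynomial.C (pdx (b m) z)) * P := by
          rw [Finset.sum_sub_distrib, Finset.mul_sum, Finset.sum_mul]
      _ = _ := by rw [hsPm, ← map_sum]; ring
  -- the main polynomial identity
  have hmain : (∑ k ∈ Finset.range N, Polynomial.C (pdt (a k) z) * Polynomial.X ^ k)
      = Polynomial.C (-(∑ n, pdx (b n) z))
            * ((1 + Polynomial.X ^ 2) * Polynomial.derivative P)
        + Polynomial.C ((N : ℝ) * (∑ n, pdx (b n) z)) * (Polynomial.X * P)
        + Polynomial.C (-(∑ n, b n z)) * (Polynomial.X *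
            (∑ k ∈ Finset.range N, Polynomial.C (pdx (a k) z) * Polynomial.X ^ k)) := by
    rw [hDtP]
    have hterm : ∀ m ∈ Finset.univ, Polynomial.C (-(pdt (b m) z)) * Pm m
        = Polynomial.C (-(∑ n, pdx (b n) z)) * Pm m
          + Polynomial.C (-(∑ n, pdx (b n) z)) * (Polynomial.C (b m z) ^ 2 * Pm m)
          + Polynomial.C (∑ n, b n z) * (Polynomial.C (b m z * pdx (b m) z) * Pm m) := by
      intro m _
      rw [htB m]
      simp only [map_neg, map_sub, map_add, map_mul, map_one, map_pow]
      ring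
    rw [Finset.sum_congr rfl hterm, Finset.sum_add_distrib, Finset.sum_add_distrib,
      ← Finset.mul_sum, ← Finset.mul_sum, ← Finset.mul_sum, e2, e3, ← hdP]
    simp only [map_neg, map_mul, map_natCast]
    ring
  -- coefficient facts
  have hPc : ∀ k, k ≤ N → P.coeff k = a k z := by
    intro k hk
    rw [hP, coeffSum, if_pos (by omega)]
  have hP'c : ∀ i, i < N →
      (Polynomial.derivative P).coeff i = ((i : ℝ) + 1) * a (i + 1) z := by
    intro i hi
    rw [Polynomial.coeff_derivative, hPc (i + 1) (by omega)]
    ring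
  have hDac : ∀ j, j < N →
      (∑ k ∈ Finset.range N, Polynomial.C (pdx (a k) z) * Polynomial.X ^ k).coeff j
        = pdx (a j) z := by
    intro j hj
    rw [coeffSum, if_pos hj]
  have hPmc : ∀ m, (Pm m).coeff (N - 1) = 1 := by
    intro m
    have hmon : (Pm m).Monic := by
      simp only [hPmdef]
      exact Polynomial.monic_prod_of_monic _ _ fun j _ => Polynomial.monic_X_sub_C _
    have hdeg : (Pm m).natDegree = N - 1 := by
      simp only [hPmdef]
      rw [Polynomial.natDegree_prod_of_monic _ _ fun j _ => Polynomial.monic_X_sub_C _]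
      simp [Polynomial.natDegree_X_sub_C, Finset.card_erase_of_mem]
    rw [← hdeg]
    exact hmon.coeff_natDegree
  have hDaN1 : pdx (a (N - 1)) z = -(∑ n, pdx (b n) z) := by
    have h : (∑ k ∈ Finset.range N, Polynomial.C (pdx (a k) z) * Polynomial.X ^ k).coeff (N - 1)
        = (∑ m, Polynomial.C (-(pdx (b m) z)) * Pm m).coeff (N - 1) := by rw [hDaP]
    rw [hDac (N - 1) (by omega), Polynomial.finset_sum_coeff] at h
    simp only [Polynomial.coeff_C_mul, hPmc, mul_one] at h
    rw [h, ← Finset.sum_neg_distrib]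
  have hAN1 : a (N - 1) z = -(∑ n, b n z) := by
    have h := Polynomial.prod_X_sub_C_coeff_card_pred (Finset.univ : Finset (Fin N))
      (fun m => b m z) (by simp; omega)
    rw [Finset.card_univ, Fintype.card_fin] at h
    rw [← hPc (N - 1) (by omega)]
    exact h
  -- coefficient extraction from the main identity
  have hDtc : ∀ j, j < N → pdt (a j) z
      = -(∑ n, pdx (b n) z) * ((Polynomial.derivative P).coeff j
            + if 2 ≤ j then (Polynomial.derivative P).coeff (j - 2) else 0)
        + (N : ℝ) * (∑ n, pdx (b n) z) * (if 1 ≤ j then P.coeff (j - 1) else 0)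
        + -(∑ n, b n z) * (if 1 ≤ j then
            (∑ k ∈ Finset.range N, Polynomial.C (pdx (a k) z) * Polynomial.X ^ k).coeff (j - 1)
          else 0) := by
    intro j hj
    have h := congrArg (fun p : Polynomial ℝ => p.coeff j) hmain
    simp only [Polynomial.coeff_add, Polynomial.coeff_C_mul, coeff_one_add_X_sq_mul,
      coeff_X_mul'] at h
    rw [coeffSum, if_pos hj] at h
    exact h
  refine ⟨?_, ?_⟩
  · have h0 := hDtc 0 (by omega)
    norm_num at h0
    rw [hP'c 0 (by omega)] at h0
    rw [h0, hDaN1]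
    norm_num
    ring
  · intro k hk1 hkN
    have hkN' : k < N := by omega
    have h := hDtc k hkN'
    rw [if_pos hk1, if_pos hk1] at h
    rw [hP'c k hkN', hPc (k - 1) (by omega), hDac (k - 1) (by omega)] at h
    rw [hDaN1, hAN1]
    by_cases h2 : 2 ≤ k
    · rw [if_pos h2, hP'c (k - 2) (by omega)] at h
      have hidx : k - 2 + 1 = k - 1 := by omega
      rw [hidx] at h
      rw [h, Nat.cast_sub h2]
      push_cast
      ring
    · have hk : k = 1 := by omega
      subst hk
      rw [if_neg h2] at h
      rw [h]
      push_cast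
      ring
end

section
/- Let N ≥ 2 and let b¹,…,b^N : Ω → ℝ be differentiable functions on an open set Ω ⊆ ℝ². Define h^k := −b^k/√(1+(b^k)²), so each h^k takes values in (−1,1) and b^k = −h^k/√(1−(h^k)²). Then the b^k satisfy system (B) if and only if the h^k satisfy the symmetric conservative system ∂_t h^k = ∂_x( √(1−(h^k)²) · Σ_{m=1}^{N} h^m/√(1−(h^m)²) ) for k = 1,…,N. -/
/-- Auxiliary: derivative of `p / sqrt (1 + f²)` applied to a vector. -/
lemma quot_apply (f p : ℝ × ℝ → ℝ) (z v : ℝ × ℝ)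
    (hf : DifferentiableAt ℝ f z) (hp : DifferentiableAt ℝ p z) :
    fderiv ℝ (fun w => p w * (Real.sqrt (1 + f w ^ 2))⁻¹) z v =
      (Real.sqrt (1 + f z ^ 2))⁻¹ * fderiv ℝ p z v -
        p z * f z * ((1 + f z ^ 2) * Real.sqrt (1 + f z ^ 2))⁻¹ * fderiv ℝ f z v := by
  have hpos : (0:ℝ) < 1 + f z ^ 2 := by positivity
  set s := Real.sqrt (1 + f z ^ 2) with hs
  have hspos : 0 < s := Real.sqrt_pos.mpr hpos
  have hs2 : s ^ 2 = 1 + f z ^ 2 := Real.sq_sqrt hpos.le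
  have h1 : HasFDerivAt (fun w => 1 + f w ^ 2)
      (f z • fderiv ℝ f z + f z • fderiv ℝ f z) z := by
    refine ((hf.hasFDerivAt.mul hf.hasFDerivAt).const_add 1).congr_of_eventuallyEq ?_
    filter_upwards with w
    rw [Pi.mul_apply]
    ring
  have h2 := h1.sqrt hpos.ne'
  have h3 := (hasFDerivAt_inv' (𝕜 := ℝ) (R := ℝ) hspos.ne').comp z h2
  have h4 : HasFDerivAt (fun w => p w * (Real.sqrt (1 + f w ^ 2))⁻¹)
      (p z • ((-((ContinuousLinearMap.mulLeftRight ℝ ℝ) s⁻¹) s⁻¹).comp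
          ((1 / (2 * s)) • (f z • fderiv ℝ f z + f z • fderiv ℝ f z))) +
        s⁻¹ • fderiv ℝ p z) z := by
    refine (hp.hasFDerivAt.mul h3).congr_of_eventuallyEq ?_
    filter_upwards with w
    rfl
  rw [h4.fderiv]
  simp only [ContinuousLinearMap.add_apply, ContinuousLinearMap.smul_apply, smul_eq_mul,
    ContinuousLinearMap.coe_comp', Function.comp_apply, ContinuousLinearMap.mulLeftRight_apply,
    ContinuousLinearMap.neg_apply]
  rw [← hs2]
  field_simp
  ring

/-- with `h^k = −b^k/√(1+(b^k)²)` (values in `(−1,1)`, and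
`b^k = −h^k/√(1−(h^k)²)`), the `b^k` satisfy system (B) if and only if the `h^k`
satisfy the symmetric conservative system
`∂_t h^k = ∂_x(√(1−(h^k)²)·Σ_m h^m/√(1−(h^m)²))`. -/
theorem statement12 (N : ℕ) (hN : 2 ≤ N) (Ω : Set (ℝ × ℝ)) (hΩ : IsOpen Ω)
    (b : Fin N → ℝ × ℝ → ℝ)
    (hb : ∀ k, DifferentiableOn ℝ (b k) Ω)
    (h : Fin N → ℝ × ℝ → ℝ)
    (hh : ∀ k z, h k z = -(b k z) / Real.sqrt (1 + (b k z) ^ 2)) :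
    (∀ k z, h k z ∈ Set.Ioo (-1 : ℝ) 1) ∧
    (∀ k z, b k z = -(h k z) / Real.sqrt (1 - (h k z) ^ 2)) ∧
    (SystemB N Ω b ↔
      ∀ z ∈ Ω, ∀ k,
        pdt (h k) z =
          pdx (fun w =>
            Real.sqrt (1 - (h k w) ^ 2) *
              ∑ m, h m w / Real.sqrt (1 - (h m w) ^ 2)) z) := by
  have hpos : ∀ u : ℝ, (0:ℝ) < 1 + u ^ 2 := fun u => by positivity
  have hspos : ∀ u : ℝ, 0 < Real.sqrt (1 + u ^ 2) :=
    fun u => Real.sqrt_pos.mpr (hpos u)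
  have hs2 : ∀ u : ℝ, Real.sqrt (1 + u ^ 2) ^ 2 = 1 + u ^ 2 :=
    fun u => Real.sq_sqrt (hpos u).le
  -- Part 1
  have part1 : ∀ k z, h k z ∈ Set.Ioo (-1 : ℝ) 1 := by
    intro k z
    rw [hh]
    set u := b k z with hu
    have h1 : |u| < Real.sqrt (1 + u ^ 2) := by
      nlinarith [hspos u, hs2 u, abs_nonneg u, sq_abs u]
    have h2 : |(-u / Real.sqrt (1 + u ^ 2))| < 1 := by
      rw [abs_div, abs_neg, abs_of_pos (hspos u), div_lt_one (hspos u)]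
      exact h1
    exact ⟨(abs_lt.mp h2).1, (abs_lt.mp h2).2⟩
  -- key identity: 1 - h² = (1 + b²)⁻¹
  have keyA : ∀ k z, 1 - (h k z) ^ 2 = (1 + (b k z) ^ 2)⁻¹ := by
    intro k z
    rw [hh]
    set u := b k z with hu
    rw [div_pow, neg_sq, hs2 u]
    field_simp
    ring
  have keyB : ∀ k z, Real.sqrt (1 - (h k z) ^ 2) = (Real.sqrt (1 + (b k z) ^ 2))⁻¹ := by
    intro k z
    rw [keyA, Real.sqrt_inv]
  -- Part 2
  have part2 : ∀ k z, b k z = -(h k z) / Real.sqrt (1 - (h k z) ^ 2) := by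
    intro k z
    rw [keyB, hh]
    set u := b k z with hu
    have hne := (hspos u).ne'
    field_simp
  have keyC : ∀ m z, h m z / Real.sqrt (1 - (h m z) ^ 2) = -(b m z) := by
    intro m z
    have h1 := part2 m z
    rw [neg_div] at h1
    linarith
  refine ⟨part1, part2, ?_⟩
  have main : ∀ z ∈ Ω, ∀ k,
      (pdt (b k) z =
        (1 + (b k z) ^ 2) * ∑ m, pdx (b m) z - (∑ n, b n z) * b k z * pdx (b k) z) ↔
      (pdt (h k) z =
        pdx (fun w =>
          Real.sqrt (1 - (h k w) ^ 2) *
            ∑ m, h m w / Real.sqrt (1 - (h m w) ^ 2)) z) := by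
    intro z hz k
    have hdm : ∀ m, DifferentiableAt ℝ (b m) z :=
      fun m => ((hb m) z hz).differentiableAt (hΩ.mem_nhds hz)
    set B := b k z with hB
    set S := Real.sqrt (1 + (b k z) ^ 2) with hS
    have hS2 : S ^ 2 = 1 + B ^ 2 := hs2 B
    have hSpos : 0 < S := hspos B
    set T : ℝ := fderiv ℝ (b k) z (0, 1) with hT
    set X : Fin N → ℝ := fun m => fderiv ℝ (b m) z (1, 0) with hX
    -- rewrite h k and the flux as quotients in b
    have hfun : h k = fun w => -(b k w) * (Real.sqrt (1 + (b k w) ^ 2))⁻¹ := by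
      funext w
      rw [hh, div_eq_mul_inv]
    have Ffun : (fun w => Real.sqrt (1 - (h k w) ^ 2) *
          ∑ m, h m w / Real.sqrt (1 - (h m w) ^ 2)) =
        fun w => (-(∑ m, b m w)) * (Real.sqrt (1 + (b k w) ^ 2))⁻¹ := by
      funext w
      rw [keyB]
      simp only [keyC]
      rw [Finset.sum_neg_distrib]
      ring
    -- derivative of the negated sum
    have hsum : HasFDerivAt (fun w => -(∑ m, b m w))
        (-(∑ m, fderiv ℝ (b m) z)) z :=
      (HasFDerivAt.fun_sum fun m _ => (hdm m).hasFDerivAt).fun_neg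
    have hsumdiff : DifferentiableAt ℝ (fun w => -(∑ m, b m w)) z :=
      hsum.differentiableAt
    have hsumval : ∀ v : ℝ × ℝ, fderiv ℝ (fun w => -(∑ m, b m w)) z v =
        -(∑ m, fderiv ℝ (b m) z v) := by
      intro v
      rw [hsum.fderiv]
      simp [ContinuousLinearMap.sum_apply]
    -- compute pdt (h k)
    have E1 : pdt (h k) z =
        S⁻¹ * (-T) - (-B) * B * ((1 + B ^ 2) * S)⁻¹ * T := by
      rw [pdt, hfun]
      have := quot_apply (b k) (fun w => -(b k w)) z (0, 1) (hdm k) (hdm k).neg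
      rw [this, fderiv_fun_neg]
      simp [hT, hB, hS]
    -- compute pdx of the flux
    have E2 : pdx (fun w => Real.sqrt (1 - (h k w) ^ 2) *
          ∑ m, h m w / Real.sqrt (1 - (h m w) ^ 2)) z =
        S⁻¹ * (-(∑ m, X m)) - (-(∑ m, b m z)) * B * ((1 + B ^ 2) * S)⁻¹ * X k := by
      rw [pdx, Ffun]
      have := quot_apply (b k) (fun w => -(∑ m, b m w)) z (1, 0) (hdm k) hsumdiff
      rw [this, hsumval]
    rw [E1, E2]
    simp only [pdt, pdx, ← hT, ← hX, ← hB]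
    have L : S⁻¹ * (-T) - (-B) * B * ((1 + B ^ 2) * S)⁻¹ * T =
        (-(((1 + B ^ 2) * S)⁻¹)) * T := by
      rw [← hS2]
      field_simp
      linear_combination (-T) * hS2
    have R : S⁻¹ * (-(∑ m, X m)) - (-(∑ m, b m z)) * B * ((1 + B ^ 2) * S)⁻¹ * X k =
        (-(((1 + B ^ 2) * S)⁻¹)) * ((1 + B ^ 2) * (∑ m, X m) - (∑ n, b n z) * B * X k) := by
      rw [← hS2]
      field_simp
      ring
    rw [L, R]
    have hcne : (-(((1 + B ^ 2) * S)⁻¹)) ≠ 0 := by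
      have h1 : (0:ℝ) < (1 + B ^ 2) * S := by positivity
      exact neg_ne_zero.mpr (inv_ne_zero h1.ne')
    constructor
    · intro H
      rw [H]
    · intro H
      exact mul_left_cancel₀ hcne H
  unfold SystemB
  constructor
  · intro H z hz k
    exact (main z hz k).mp (H z hz k)
  · intro H z hz k
    exact (main z hz k).mpr (H z hz k)
end

section
/- Let N ≥ 2 and let b¹,…,b^N : Ω → ℝ be differentiable functions on an open set Ω ⊆ ℝ², pairwise distinct at every point, satisfying system (B). Fix k ∈ {1,…,N} and define p₁^{(k)} := −(1+(b^k)²)^{(N−3)/2} / ∏_{m≠k}(b^k − b^m). Then p₁^{(k)} is a conservation law density with the conservation law ∂_t p₁^{(k)} = ∂_x( −b^k · p₁^{(k)} · Σ_{n=1}^{N} b^n ) on Ω. -/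
/-- for pairwise distinct solutions of system (B), each density
`p₁^{(k)} = −(1+(b^k)²)^{(N−3)/2} / ∏_{m≠k}(b^k − b^m)` satisfies the conservation law
`∂_t p₁^{(k)} = ∂_x(−b^k·p₁^{(k)}·Σ_n b^n)`. -/
theorem statement13 (N : ℕ) (hN : 2 ≤ N) (Ω : Set (ℝ × ℝ)) (hΩ : IsOpen Ω)
    (b : Fin N → ℝ × ℝ → ℝ)
    (hb : ∀ k, DifferentiableOn ℝ (b k) Ω)
    (hdist : ∀ z ∈ Ω, ∀ i j, i ≠ j → b i z ≠ b j z)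
    (hB : SystemB N Ω b)
    (k : Fin N)
    (p1 : ℝ × ℝ → ℝ)
    (hp1 : ∀ z, p1 z =
      -((1 + (b k z) ^ 2) ^ (((N : ℝ) - 3) / 2)) /
        ∏ m ∈ Finset.univ.erase k, (b k z - b m z)) :
    ∀ z ∈ Ω,
      pdt p1 z = pdx (fun w => -(b k w) * p1 w * ∑ n, b n w) z := by
  intro z hz
  classical
  have hzΩ := hΩ.mem_nhds hz
  have hL : ∀ m, HasFDerivAt (b m) (fderiv ℝ (b m) z) z :=
    fun m => (((hb m) z hz).differentiableAt hzΩ).hasFDerivAt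
  have hu : (0:ℝ) < 1 + (b k z)^2 := by positivity
  have hDne : (∏ m ∈ Finset.univ.erase k, (b k z - b m z)) ≠ 0 :=
    Finset.prod_ne_zero_iff.2 fun m hm => sub_ne_zero.2
      (hdist z hz k m (Ne.symm (Finset.ne_of_mem_erase hm)))
  set α : ℝ := ((N:ℝ)-3)/2 with hα
  have hu' : (0:ℝ) < 1 + b k z * b k z := by nlinarith [sq_nonneg (b k z)]
  have hfk : HasFDerivAt (fun w => 1 + b k w * b k w)
      (b k z • fderiv ℝ (b k) z + b k z • fderiv ℝ (b k) z) z :=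
    ((hL k).mul (hL k)).const_add 1
  have hg := hfk.rpow_const (p := α) (Or.inl hu'.ne')
  have hP := HasFDerivAt.finset_prod (x := z) (u := Finset.univ.erase k)
    (g := fun m w => b k w - b m w) (fun m _ => (hL k).sub (hL m))
  have hinv := (hasDerivAt_inv hDne).comp_hasFDerivAt z hP
  have hq := (hg.fun_neg).fun_mul hinv
  have hp1' : HasFDerivAt p1 _ z :=
    hq.congr_of_eventuallyEq (Filter.Eventually.of_forall fun w => by
      simp only [Function.comp, hp1 w, div_eq_mul_inv, pow_two])
  have hsum : HasFDerivAt (fun w => ∑ n, b n w) (∑ n, fderiv ℝ (b n) z) z :=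
    HasFDerivAt.fun_sum (fun n _ => hL n)
  have hF := (((hL k).fun_neg).fun_mul hp1').fun_mul hsum
  have hτ := fun m => hB z hz m
  simp only [pdt, pdx] at hτ ⊢
  rw [hp1'.fderiv, hF.fderiv]
  simp only [ContinuousLinearMap.add_apply, ContinuousLinearMap.smul_apply,
    ContinuousLinearMap.neg_apply, ContinuousLinearMap.sub_apply,
    ContinuousLinearMap.sum_apply, ContinuousLinearMap.coe_sum',
    Function.comp, smul_eq_mul, hp1 z, hτ]
  rw [show (1 + b k z * b k z : ℝ) = 1 + b k z ^ 2 by ring]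
  -- scalar abbreviations
  have hPD : ∀ m ∈ Finset.univ.erase k,
      (∏ j ∈ (Finset.univ.erase k).erase m, (b k z - b j z)) * (b k z - b m z)
        = ∏ m ∈ Finset.univ.erase k, (b k z - b m z) := fun m hm =>
    Finset.prod_erase_mul _ _ hm
  have hcard : (((Finset.univ.erase k).card : ℕ) : ℝ) = (N:ℝ) - 1 := by
    rw [Finset.card_erase_of_mem (Finset.mem_univ k), Finset.card_univ, Fintype.card_fin]
    push_cast [Nat.cast_sub (by omega : 1 ≤ N)]
    ring
  have hsB : ∑ m ∈ Finset.univ.erase k, b m z = (∑ n, b n z) - b k z :=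
    Finset.sum_erase_eq_sub (Finset.mem_univ k)
  have hsβ : ∑ m ∈ Finset.univ.erase k, (fderiv ℝ (b m) z) (1,0)
      = (∑ n, (fderiv ℝ (b n) z) (1,0)) - (fderiv ℝ (b k) z) (1,0) :=
    Finset.sum_erase_eq_sub (Finset.mem_univ k)
  have hsumτ : ∑ x ∈ Finset.univ.erase k,
      (∏ m ∈ (Finset.univ.erase k).erase x, (b k z - b m z)) *
        ((1 + b k z ^ 2) * (∑ x : Fin N, (fderiv ℝ (b x) z) (1, 0)) -
            (∑ n : Fin N, b n z) * b k z * (fderiv ℝ (b k) z) (1, 0) -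
          ((1 + b x z ^ 2) * (∑ x : Fin N, (fderiv ℝ (b x) z) (1, 0)) -
            (∑ n : Fin N, b n z) * b x z * (fderiv ℝ (b x) z) (1, 0)))
     = (∑ x : Fin N, (fderiv ℝ (b x) z) (1, 0)) * (((N:ℝ)-2) * b k z + (∑ n, b n z)) *
          (∏ m ∈ Finset.univ.erase k, (b k z - b m z))
       - (∑ n, b n z) * b k z *
          (∑ x ∈ Finset.univ.erase k,
            (∏ m ∈ (Finset.univ.erase k).erase x, (b k z - b m z)) *
              ((fderiv ℝ (b k) z) (1, 0) - (fderiv ℝ (b x) z) (1, 0)))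
       - (∑ n, b n z) * ((∑ n, (fderiv ℝ (b n) z) (1,0)) - (fderiv ℝ (b k) z) (1,0)) *
          (∏ m ∈ Finset.univ.erase k, (b k z - b m z)) := by
    have h1 : ∀ x ∈ Finset.univ.erase k,
        (∏ m ∈ (Finset.univ.erase k).erase x, (b k z - b m z)) *
          ((1 + b k z ^ 2) * (∑ x : Fin N, (fderiv ℝ (b x) z) (1, 0)) -
              (∑ n : Fin N, b n z) * b k z * (fderiv ℝ (b k) z) (1, 0) -
            ((1 + b x z ^ 2) * (∑ x : Fin N, (fderiv ℝ (b x) z) (1, 0)) -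
              (∑ n : Fin N, b n z) * b x z * (fderiv ℝ (b x) z) (1, 0)))
        = ((∑ x : Fin N, (fderiv ℝ (b x) z) (1, 0)) * b k z *
            (∏ m ∈ Finset.univ.erase k, (b k z - b m z))
          + ((∑ x : Fin N, (fderiv ℝ (b x) z) (1, 0)) *
              (∏ m ∈ Finset.univ.erase k, (b k z - b m z))) * b x z)
          - ((∑ n, b n z) * b k z) *
            ((∏ m ∈ (Finset.univ.erase k).erase x, (b k z - b m z)) *
              ((fderiv ℝ (b k) z) (1, 0) - (fderiv ℝ (b x) z) (1, 0)))
          - ((∑ n, b n z) * (∏ m ∈ Finset.univ.erase k, (b k z - b m z))) *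
              (fderiv ℝ (b x) z) (1,0) := fun x hx => by
      linear_combination ((∑ x : Fin N, (fderiv ℝ (b x) z) (1, 0)) * (b k z + b x z)
        - (∑ n, b n z) * (fderiv ℝ (b x) z) (1,0)) * hPD x hx
    have e0 : ∑ _x ∈ Finset.univ.erase k,
        ((∑ x : Fin N, (fderiv ℝ (b x) z) (1, 0)) * b k z *
          (∏ m ∈ Finset.univ.erase k, (b k z - b m z)))
        = ((N:ℝ)-1) * ((∑ x : Fin N, (fderiv ℝ (b x) z) (1, 0)) * b k z *
          (∏ m ∈ Finset.univ.erase k, (b k z - b m z))) := by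
      rw [Finset.sum_const, nsmul_eq_mul, hcard]
    have e1 : ∑ x ∈ Finset.univ.erase k,
        (((∑ x : Fin N, (fderiv ℝ (b x) z) (1, 0)) *
          (∏ m ∈ Finset.univ.erase k, (b k z - b m z))) * b x z)
        = ((∑ x : Fin N, (fderiv ℝ (b x) z) (1, 0)) *
          (∏ m ∈ Finset.univ.erase k, (b k z - b m z))) * ((∑ n, b n z) - b k z) := by
      rw [← Finset.mul_sum, hsB]
    have e2 : ∑ x ∈ Finset.univ.erase k,
        (((∑ n, b n z) * b k z) *
          ((∏ m ∈ (Finset.univ.erase k).erase x, (b k z - b m z)) *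
            ((fderiv ℝ (b k) z) (1, 0) - (fderiv ℝ (b x) z) (1, 0))))
        = ((∑ n, b n z) * b k z) * (∑ x ∈ Finset.univ.erase k,
            (∏ m ∈ (Finset.univ.erase k).erase x, (b k z - b m z)) *
              ((fderiv ℝ (b k) z) (1, 0) - (fderiv ℝ (b x) z) (1, 0))) := by
      rw [← Finset.mul_sum]
    have e3 : ∑ x ∈ Finset.univ.erase k,
        (((∑ n, b n z) * (∏ m ∈ Finset.univ.erase k, (b k z - b m z))) *
          (fderiv ℝ (b x) z) (1,0))
        = ((∑ n, b n z) * (∏ m ∈ Finset.univ.erase k, (b k z - b m z))) *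
          ((∑ n, (fderiv ℝ (b n) z) (1,0)) - (fderiv ℝ (b k) z) (1,0)) := by
      rw [← Finset.mul_sum, hsβ]
    rw [Finset.sum_congr rfl h1, Finset.sum_sub_distrib, Finset.sum_sub_distrib,
      Finset.sum_add_distrib, e0, e1, e2, e3]
    ring
  rw [hsumτ]
  have hgA : (1 + b k z ^ 2) ^ α = (1 + b k z ^ 2) ^ (α - 1) * (1 + b k z ^ 2) := by
    rw [← Real.rpow_add_one hu.ne', sub_add_cancel]
  rw [hgA, hα]
  generalize (∑ x ∈ Finset.univ.erase k,
    (∏ m ∈ (Finset.univ.erase k).erase x, (b k z - b m z)) *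
      ((fderiv ℝ (b k) z) (1, 0) - (fderiv ℝ (b x) z) (1, 0))) = X
  generalize hDarg : (∏ m ∈ Finset.univ.erase k, (b k z - b m z)) = D at hDne ⊢
  generalize ((1 + b k z ^ 2 : ℝ) ^ ((((N:ℝ)-3)/2) - 1)) = A
  generalize (∑ x : Fin N, (fderiv ℝ (b x) z) (1, 0)) = Sβ
  generalize ((fderiv ℝ (b k) z) (1, 0)) = βk
  generalize (∑ n : Fin N, b n z) = S
  field_simp
  ring
end

section
/- Let N ≥ 2 and let b¹,…,b^N : Ω → ℝ be differentiable functions on an open set Ω ⊆ ℝ² satisfying system (B). Define the moments B^j := (1/(j+1))·Σ_{m=1}^{N} (b^m)^{j+1} for j ≥ 0. Then the moments satisfy the hydrodynamic chain: ∂_t B⁰ = (N + 2B¹)·∂_x B⁰ − B⁰·∂_x B¹, and for every k ≥ 1, ∂_t B^k = (k·B^{k−1} + (k+2)·B^{k+1})·∂_x B⁰ − B⁰·∂_x B^{k+1}. -/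
/-- The moments `B^j = (1/(j+1))·Σ_m (b^m)^{j+1}`. -/
noncomputable def moment (N : ℕ) (b : Fin N → ℝ × ℝ → ℝ) (j : ℕ) (z : ℝ × ℝ) : ℝ :=
  (1 / ((j : ℝ) + 1)) * ∑ m, (b m z) ^ (j + 1)

lemma pd_moment {N : ℕ} {b : Fin N → ℝ × ℝ → ℝ} {z : ℝ × ℝ}
    (hd : ∀ m, DifferentiableAt ℝ (b m) z) (j : ℕ) (v : ℝ × ℝ) :
    fderiv ℝ (moment N b j) z v = ∑ m, (b m z) ^ j * fderiv ℝ (b m) z v := by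
  have h1 : HasFDerivAt (fun w => ∑ m, (b m w) ^ (j + 1))
      (∑ m, ((((j : ℝ) + 1) * (b m z) ^ j) • fderiv ℝ (b m) z)) z := by
    apply HasFDerivAt.fun_sum
    intro m _
    have h := (hasDerivAt_pow (j + 1) (b m z)).comp_hasFDerivAt z (hd m).hasFDerivAt
    have he : ((j + 1 : ℕ) : ℝ) * b m z ^ (j + 1 - 1) = ((j : ℝ) + 1) * (b m z) ^ j := by
      push_cast [Nat.add_sub_cancel]; ring
    rw [he] at h
    exact h
  have h2 : HasFDerivAt (moment N b j)
      ((1 / ((j : ℝ) + 1)) • (∑ m, ((((j : ℝ) + 1) * (b m z) ^ j) • fderiv ℝ (b m) z))) z :=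
    h1.const_mul _
  rw [h2.fderiv]
  simp only [ContinuousLinearMap.smul_apply, ContinuousLinearMap.sum_apply,
    ContinuousLinearMap.coe_smul', Pi.smul_apply, smul_eq_mul, Finset.mul_sum]
  refine Finset.sum_congr rfl fun m _ => ?_
  have hj : ((j : ℝ) + 1) ≠ 0 := by positivity
  field_simp


/-- for solutions of system (B), the moments satisfy the hydrodynamic
chain `∂_t B⁰ = (N + 2B¹)∂_x B⁰ − B⁰∂_x B¹` and, for `k ≥ 1`,
`∂_t B^k = (kB^{k−1} + (k+2)B^{k+1})∂_x B⁰ − B⁰∂_x B^{k+1}`. -/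
theorem statement14 (N : ℕ) (hN : 2 ≤ N) (Ω : Set (ℝ × ℝ)) (hΩ : IsOpen Ω)
    (b : Fin N → ℝ × ℝ → ℝ)
    (hb : ∀ k, DifferentiableOn ℝ (b k) Ω)
    (hB : SystemB N Ω b) :
    ∀ z ∈ Ω,
      (pdt (moment N b 0) z =
        ((N : ℝ) + 2 * moment N b 1 z) * pdx (moment N b 0) z -
          moment N b 0 z * pdx (moment N b 1) z) ∧
      ∀ k : ℕ, 1 ≤ k →
        pdt (moment N b k) z =
          ((k : ℝ) * moment N b (k - 1) z + ((k : ℝ) + 2) * moment N b (k + 1) z) *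
              pdx (moment N b 0) z -
            moment N b 0 z * pdx (moment N b (k + 1)) z := by
  intro z hz
  have hd : ∀ m, DifferentiableAt ℝ (b m) z := fun m =>
    (hb m).differentiableAt (hΩ.mem_nhds hz)
  have hB0 : moment N b 0 z = ∑ n, b n z := by simp [moment]
  have hx : ∀ j, pdx (moment N b j) z = ∑ m, (b m z) ^ j * pdx (b m) z := fun j =>
    pd_moment hd j (1, 0)
  have hx0 : pdx (moment N b 0) z = ∑ m, pdx (b m) z := by
    rw [hx]; simp
  have key : ∀ j : ℕ, pdt (moment N b j) z =
      ((∑ m, (b m z) ^ j) + ∑ m, (b m z) ^ (j + 2)) * pdx (moment N b 0) z -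
        moment N b 0 z * pdx (moment N b (j + 1)) z := by
    intro j
    have h1 : pdt (moment N b j) z = ∑ m, (b m z) ^ j * pdt (b m) z :=
      pd_moment hd j (0, 1)
    rw [h1, hx0, hx (j + 1), hB0]
    rw [Finset.sum_congr rfl (fun m _ => by rw [hB z hz m])]
    rw [Finset.sum_congr rfl (fun m _ => show
        (b m z) ^ j * ((1 + (b m z) ^ 2) * (∑ m', pdx (b m') z)
          - (∑ n, b n z) * b m z * pdx (b m) z)
        = ((b m z) ^ j + (b m z) ^ (j + 2)) * (∑ m', pdx (b m') z)
          - (∑ n, b n z) * ((b m z) ^ (j + 1) * pdx (b m) z) from by ring)]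
    rw [Finset.sum_sub_distrib, ← Finset.sum_mul, Finset.sum_add_distrib, ← Finset.mul_sum]
  constructor
  · have h2 : ∑ m : Fin N, (b m z) ^ (0 + 2) = 2 * moment N b 1 z := by
      simp [moment]; ring
    have h0 : ∑ m : Fin N, (b m z) ^ 0 = (N : ℝ) := by simp
    have := key 0
    rw [h0, h2] at this
    simpa using this
  · intro k hk
    have hk1 : ∑ m : Fin N, (b m z) ^ k = (k : ℝ) * moment N b (k - 1) z := by
      have hkk : (k - 1) + 1 = k := Nat.succ_pred_eq_of_pos hk
      have hc : ((k - 1 : ℕ) : ℝ) + 1 = (k : ℝ) := by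
        rw [Nat.cast_sub hk]; push_cast; ring
      rw [moment, hkk, hc]
      have : (k : ℝ) ≠ 0 := by positivity
      field_simp
    have hk2 : ∑ m : Fin N, (b m z) ^ (k + 2) = ((k : ℝ) + 2) * moment N b (k + 1) z := by
      have hne : (k : ℝ) + 2 ≠ 0 := by positivity
      rw [moment, show ((k + 1 : ℕ) : ℝ) + 1 = (k : ℝ) + 2 from by push_cast; ring,
        show (k + 1) + 1 = k + 2 from rfl, ← mul_assoc, mul_one_div_cancel hne, one_mul]
    have := key k
    rw [hk1, hk2] at this
    exact this
end

section
/- Let N ≥ 2 and let b¹,…,b^N : Ω → ℝ be differentiable functions on an open set Ω ⊆ ℝ² satisfying system (B), with C⁰ := Σ_{m=1}^N b^m nonvanishing on Ω. Define C¹ := (1/2)·Σ_{m=1}^N (b^m)² + N/2. Then the first Kruskal conservation law holds: ∂_t( (C⁰)^{-2} ) = ∂_x( 2C¹·(C⁰)^{-2} ) on Ω. -/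
/-- for solutions of system (B) with `C⁰ = Σ b^m` nonvanishing and
`C¹ = ½Σ(b^m)² + N/2`, the first Kruskal conservation law holds:
`∂_t((C⁰)^{-2}) = ∂_x(2C¹(C⁰)^{-2})`. -/
theorem statement15 (N : ℕ) (hN : 2 ≤ N) (Ω : Set (ℝ × ℝ)) (hΩ : IsOpen Ω)
    (b : Fin N → ℝ × ℝ → ℝ)
    (hb : ∀ k, DifferentiableOn ℝ (b k) Ω)
    (hB : SystemB N Ω b)
    (C0 C1 : ℝ × ℝ → ℝ)
    (hC0 : ∀ z, C0 z = ∑ m, b m z)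
    (hC1 : ∀ z, C1 z = (1 / 2) * ∑ m, (b m z) ^ 2 + (N : ℝ) / 2)
    (hnz : ∀ z ∈ Ω, C0 z ≠ 0) :
    ∀ z ∈ Ω,
      pdt (fun w => ((C0 w) ^ 2)⁻¹) z = pdx (fun w => 2 * C1 w * ((C0 w) ^ 2)⁻¹) z := by
  intro z hz
  have hd : ∀ k, DifferentiableAt ℝ (b k) z := fun k =>
    ((hb k).differentiableAt (hΩ.mem_nhds hz))
  set D : Fin N → (ℝ × ℝ) →L[ℝ] ℝ := fun k => fderiv ℝ (b k) z with hD
  have hfd : ∀ k, HasFDerivAt (b k) (D k) z := fun k => (hd k).hasFDerivAt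
  have hSne : (∑ m, b m z) ≠ 0 := by rw [← hC0 z]; exact hnz z hz
  -- derivative of the sum
  have hS : HasFDerivAt (fun w => ∑ m, b m w) (∑ m, D m) z := by
    simpa using HasFDerivAt.fun_sum (fun m (_ : m ∈ Finset.univ) => hfd m)
  have hC0f : C0 = fun w => ∑ m, b m w := funext hC0
  have hC1f : C1 = fun w => (1 / 2) * ∑ m, (b m w) ^ 2 + (N : ℝ) / 2 := funext hC1
  -- derivative of C0^2
  have hSq : HasFDerivAt (fun w => (C0 w) ^ 2)
      ((∑ m, b m z) • (∑ m, D m) + (∑ m, b m z) • (∑ m, D m)) z := by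
    rw [hC0f]
    have := hS.mul hS
    simpa [pow_two, Pi.mul_def] using this
  have hSqne : (C0 z) ^ 2 ≠ 0 := pow_ne_zero 2 (hnz z hz)
  have hInv : HasFDerivAt (fun w => ((C0 w) ^ 2)⁻¹)
      ((-(((C0 z) ^ 2) ^ 2)⁻¹) •
        ((∑ m, b m z) • (∑ m, D m) + (∑ m, b m z) • (∑ m, D m))) z := by
    have h := HasDerivAt.comp_hasFDerivAt z (hasDerivAt_inv hSqne) hSq
    simpa [Function.comp_def] using h
  -- derivative of C1
  have hSq2 : ∀ m : Fin N, HasFDerivAt (fun w => (b m w) ^ 2)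
      (b m z • D m + b m z • D m) z := by
    intro m
    simpa [pow_two, Pi.mul_def] using (hfd m).mul (hfd m)
  have hSum2 : HasFDerivAt (fun w => ∑ m, (b m w) ^ 2)
      (∑ m, (b m z • D m + b m z • D m)) z := by
    simpa using HasFDerivAt.fun_sum (fun m (_ : m ∈ Finset.univ) => hSq2 m)
  have hC1' : HasFDerivAt C1
      ((1 / 2 : ℝ) • ∑ m, (b m z • D m + b m z • D m)) z := by
    rw [hC1f]
    exact ((hSum2.const_mul (1 / 2 : ℝ)).add_const _)
  have h2C1 : HasFDerivAt (fun w => 2 * C1 w)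
      ((2 : ℝ) • ((1 / 2 : ℝ) • ∑ m, (b m z • D m + b m z • D m))) z :=
    hC1'.const_mul 2
  have hRHS : HasFDerivAt (fun w => 2 * C1 w * ((C0 w) ^ 2)⁻¹)
      ((2 * C1 z) • ((-(((C0 z) ^ 2) ^ 2)⁻¹) •
          ((∑ m, b m z) • (∑ m, D m) + (∑ m, b m z) • (∑ m, D m)))
        + (((C0 z) ^ 2)⁻¹) •
          ((2 : ℝ) • ((1 / 2 : ℝ) • ∑ m, (b m z • D m + b m z • D m)))) z :=
    h2C1.mul hInv
  rw [pdt, pdx, hInv.fderiv, hRHS.fderiv]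
  simp only [ContinuousLinearMap.add_apply, ContinuousLinearMap.smul_apply,
    ContinuousLinearMap.coe_sum', Finset.sum_apply, smul_eq_mul,
    Finset.sum_add_distrib]
  -- abbreviations
  set S : ℝ := ∑ m, b m z with hSdef
  set P : ℝ := ∑ m, D m (1, 0) with hPdef
  -- use system B to compute the t-derivatives
  have hq : ∀ k, D k (0, 1) = (1 + (b k z) ^ 2) * P - S * b k z * D k (1, 0) := by
    intro k
    have h := hB z hz k
    simp only [pdt, pdx] at h
    simp only [hD, hSdef, hPdef]
    exact h
  have hQ : ∑ k, D k (0, 1)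
      = ((N : ℝ) + ∑ k, (b k z) ^ 2) * P - S * ∑ k, b k z * D k (1, 0) := by
    rw [Finset.sum_congr rfl (fun k _ => hq k), Finset.sum_sub_distrib]
    congr 1
    · rw [← Finset.sum_mul]
      congr 1
      simp [Finset.sum_add_distrib]
    · rw [Finset.mul_sum]
      exact Finset.sum_congr rfl fun k _ => by ring
  rw [hQ, hC1 z, hC0 z, ← hSdef]
  have hS4 : S ^ 2 * S ^ 2 ≠ 0 := by positivity
  field_simp
  ring
end

section
/- Let N ≥ 2 and let b¹,…,b^N : Ω → ℝ be differentiable functions on an open set Ω ⊆ ℝ² satisfying system (B), with C⁰ := Σ_{m=1}^N b^m nonvanishing on Ω. Define C¹ := (1/2)·Σ_{m=1}^N (b^m)² + N/2 and C² := (1/3)·Σ_{m=1}^N (b^m)³. Then the second Kruskal conservation law holds: ∂_t( C¹·(C⁰)^{-4} ) = ∂_x( 2(C¹)²·(C⁰)^{-4} − C²·(C⁰)^{-3} − (1/2)·(C⁰)^{-2} ) on Ω. -/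
lemma hasFDerivAt_pow_comp {f : ℝ × ℝ → ℝ} {f' : ℝ × ℝ →L[ℝ] ℝ} {z : ℝ × ℝ}
    (hf : HasFDerivAt f f' z) (n : ℕ) :
    HasFDerivAt (fun w => f w ^ (n + 1)) ((((n + 1 : ℕ) : ℝ) * f z ^ n) • f') z := by
  induction n with
  | zero => simpa using hf
  | succ n ih =>
    have heq : (fun w => f w ^ (n + 2)) = fun w => f w ^ (n + 1) * f w := by
      funext w; ring
    rw [heq]
    have h2 := ih.mul hf
    refine h2.congr_fderiv ?_
    apply ContinuousLinearMap.ext; intro v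
    simp only [ContinuousLinearMap.add_apply, ContinuousLinearMap.smul_apply, smul_eq_mul]
    push_cast
    ring

lemma hasFDerivAt_inv_comp {f : ℝ × ℝ → ℝ} {f' : ℝ × ℝ →L[ℝ] ℝ} {z : ℝ × ℝ}
    (hf : HasFDerivAt f f' z) (h : f z ≠ 0) :
    HasFDerivAt (fun w => (f w)⁻¹) ((-(f z ^ 2)⁻¹) • f') z := by
  have h2 := (hasFDerivAt_inv h).comp z hf
  refine h2.congr_fderiv ?_
  apply ContinuousLinearMap.ext; intro v
  simp [mul_comm]

/-- for solutions of system (B) with `C⁰ = Σ b^m` nonvanishing,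
`C¹ = ½Σ(b^m)² + N/2`, `C² = ⅓Σ(b^m)³`, the second Kruskal conservation law holds:
`∂_t(C¹(C⁰)^{-4}) = ∂_x(2(C¹)²(C⁰)^{-4} − C²(C⁰)^{-3} − ½(C⁰)^{-2})`. -/
theorem statement16 (N : ℕ) (hN : 2 ≤ N) (Ω : Set (ℝ × ℝ)) (hΩ : IsOpen Ω)
    (b : Fin N → ℝ × ℝ → ℝ)
    (hb : ∀ k, DifferentiableOn ℝ (b k) Ω)
    (hB : SystemB N Ω b)
    (C0 C1 C2 : ℝ × ℝ → ℝ)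
    (hC0 : ∀ z, C0 z = ∑ m, b m z)
    (hC1 : ∀ z, C1 z = (1 / 2) * ∑ m, (b m z) ^ 2 + (N : ℝ) / 2)
    (hC2 : ∀ z, C2 z = (1 / 3) * ∑ m, (b m z) ^ 3)
    (hnz : ∀ z ∈ Ω, C0 z ≠ 0) :
    ∀ z ∈ Ω,
      pdt (fun w => C1 w / (C0 w) ^ 4) z =
        pdx (fun w =>
          2 * (C1 w) ^ 2 / (C0 w) ^ 4 - C2 w / (C0 w) ^ 3 -
            1 / (2 * (C0 w) ^ 2)) z := by
  intro z hz
  have hmem : Ω ∈ nhds z := hΩ.mem_nhds hz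
  have hd : ∀ k, DifferentiableAt ℝ (b k) z := fun k => (hb k).differentiableAt hmem
  have hc0 : C0 z ≠ 0 := hnz z hz
  set P : ℝ := ∑ m, fderiv ℝ (b m) z (1, 0) with hP
  set Q : ℝ := ∑ m, b m z * fderiv ℝ (b m) z (1, 0) with hQ
  set R : ℝ := ∑ m, (b m z) ^ 2 * fderiv ℝ (b m) z (1, 0) with hR
  -- derivatives of the moments
  have h0 : HasFDerivAt C0 (∑ m, fderiv ℝ (b m) z) z := by
    rw [show C0 = fun w => ∑ m, b m w from funext hC0]
    exact HasFDerivAt.fun_sum fun m _ => (hd m).hasFDerivAt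
  have h1 : HasFDerivAt C1
      ((1 / 2 : ℝ) • ∑ m, (((2 : ℕ) : ℝ) * b m z ^ 1) • fderiv ℝ (b m) z) z := by
    rw [show C1 = fun w => (1 / 2) * ∑ m, (b m w) ^ 2 + (N : ℝ) / 2 from funext hC1]
    exact ((HasFDerivAt.fun_sum fun m _ =>
      hasFDerivAt_pow_comp (hd m).hasFDerivAt 1).const_mul (1 / 2)).add_const _
  have h2 : HasFDerivAt C2
      ((1 / 3 : ℝ) • ∑ m, (((3 : ℕ) : ℝ) * b m z ^ 2) • fderiv ℝ (b m) z) z := by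
    rw [show C2 = fun w => (1 / 3) * ∑ m, (b m w) ^ 3 from funext hC2]
    exact (HasFDerivAt.fun_sum fun m _ =>
      hasFDerivAt_pow_comp (hd m).hasFDerivAt 2).const_mul (1 / 3)
  have d0 : DifferentiableAt ℝ C0 z := h0.differentiableAt
  have d1 : DifferentiableAt ℝ C1 z := h1.differentiableAt
  have d2 : DifferentiableAt ℝ C2 z := h2.differentiableAt
  -- x-direction values
  have hx0 : fderiv ℝ C0 z (1, 0) = P := by
    rw [h0.fderiv]
    simp [hP, ContinuousLinearMap.coe_sum', Finset.sum_apply]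
  have hx1 : fderiv ℝ C1 z (1, 0) = Q := by
    rw [h1.fderiv]
    simp only [ContinuousLinearMap.smul_apply, ContinuousLinearMap.coe_sum',
      Finset.sum_apply, smul_eq_mul, hQ, Finset.mul_sum]
    exact Finset.sum_congr rfl fun m _ => by push_cast; ring
  have hx2 : fderiv ℝ C2 z (1, 0) = R := by
    rw [h2.fderiv]
    simp only [ContinuousLinearMap.smul_apply, ContinuousLinearMap.coe_sum',
      Finset.sum_apply, smul_eq_mul, hR, Finset.mul_sum]
    exact Finset.sum_congr rfl fun m _ => by push_cast; ring
  -- the system in fderiv form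
  have hBz : ∀ k, fderiv ℝ (b k) z (0, 1)
      = (1 + (b k z) ^ 2) * P - C0 z * b k z * fderiv ℝ (b k) z (1, 0) := by
    intro k
    have h := hB z hz k
    simp only [pdt, pdx] at h
    rw [h, ← hC0 z, ← hP]
  -- moment sums
  have hS1 : ∑ m, (b m z) ^ 2 = 2 * C1 z - N := by
    have := hC1 z; linarith
  have hS2 : ∑ m, (b m z) ^ 3 = 3 * C2 z := by
    have := hC2 z; linarith
  -- t-direction values
  have ht0 : fderiv ℝ C0 z (0, 1) = 2 * C1 z * P - C0 z * Q := by
    rw [h0.fderiv]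
    simp only [ContinuousLinearMap.coe_sum', Finset.sum_apply]
    rw [Finset.sum_congr rfl fun m _ => hBz m]
    have e : ∀ m : Fin N, (1 + (b m z) ^ 2) * P - C0 z * b m z * fderiv ℝ (b m) z (1, 0)
        = (P + (b m z) ^ 2 * P) - C0 z * (b m z * fderiv ℝ (b m) z (1, 0)) := by
      intro m; ring
    rw [Finset.sum_congr rfl fun m _ => e m, Finset.sum_sub_distrib,
      Finset.sum_add_distrib, ← Finset.sum_mul, ← Finset.mul_sum, hS1, ← hQ]
    simp [Finset.card_univ]
    ring
  have ht1 : fderiv ℝ C1 z (0, 1) = (C0 z + 3 * C2 z) * P - C0 z * R := by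
    rw [h1.fderiv]
    simp only [ContinuousLinearMap.smul_apply, ContinuousLinearMap.coe_sum',
      Finset.sum_apply, smul_eq_mul, hBz]
    have e : ∀ m : Fin N, ((2 : ℕ) : ℝ) * b m z ^ 1 *
        ((1 + b m z ^ 2) * P - C0 z * b m z * fderiv ℝ (b m) z (1, 0))
        = 2 * ((b m z * P + (b m z) ^ 3 * P)
            - C0 z * ((b m z) ^ 2 * fderiv ℝ (b m) z (1, 0))) := by
      intro m; push_cast; ring
    rw [Finset.sum_congr rfl fun m _ => e m, ← Finset.mul_sum, Finset.sum_sub_distrib,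
      Finset.sum_add_distrib, ← Finset.sum_mul, ← Finset.sum_mul, ← Finset.mul_sum,
      hS2, ← hC0 z, ← hR]
    ring
  -- composite derivatives
  have h04 : HasFDerivAt (fun w => (C0 w) ^ 4)
      ((((4 : ℕ) : ℝ) * C0 z ^ 3) • fderiv ℝ C0 z) z :=
    hasFDerivAt_pow_comp d0.hasFDerivAt 3
  have h03 : HasFDerivAt (fun w => (C0 w) ^ 3)
      ((((3 : ℕ) : ℝ) * C0 z ^ 2) • fderiv ℝ C0 z) z :=
    hasFDerivAt_pow_comp d0.hasFDerivAt 2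
  have hinv4 : HasFDerivAt (fun w => ((C0 w) ^ 4)⁻¹)
      ((-((C0 z ^ 4) ^ 2)⁻¹) • ((((4 : ℕ) : ℝ) * C0 z ^ 3) • fderiv ℝ C0 z)) z :=
    hasFDerivAt_inv_comp h04 (pow_ne_zero 4 hc0)
  have hinv3 : HasFDerivAt (fun w => ((C0 w) ^ 3)⁻¹)
      ((-((C0 z ^ 3) ^ 2)⁻¹) • ((((3 : ℕ) : ℝ) * C0 z ^ 2) • fderiv ℝ C0 z)) z :=
    hasFDerivAt_inv_comp h03 (pow_ne_zero 3 hc0)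
  -- LHS
  have hFfun : (fun w => C1 w / (C0 w) ^ 4) = fun w => C1 w * ((C0 w) ^ 4)⁻¹ := by
    funext w; rw [div_eq_mul_inv]
  have hF : HasFDerivAt (fun w => C1 w / (C0 w) ^ 4)
      (C1 z • ((-((C0 z ^ 4) ^ 2)⁻¹) • ((((4 : ℕ) : ℝ) * C0 z ^ 3) • fderiv ℝ C0 z))
        + ((C0 z) ^ 4)⁻¹ • fderiv ℝ C1 z) z := by
    rw [hFfun]; exact d1.hasFDerivAt.mul hinv4
  have lhs_eq : pdt (fun w => C1 w / (C0 w) ^ 4) z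
      = C1 z * (-((C0 z ^ 4) ^ 2)⁻¹ * (4 * C0 z ^ 3 * (2 * C1 z * P - C0 z * Q)))
        + (C0 z ^ 4)⁻¹ * ((C0 z + 3 * C2 z) * P - C0 z * R) := by
    show fderiv ℝ (fun w => C1 w / (C0 w) ^ 4) z (0, 1) = _
    rw [hF.fderiv]
    simp only [ContinuousLinearMap.add_apply, ContinuousLinearMap.smul_apply, smul_eq_mul]
    rw [ht0, ht1]
    push_cast; ring
  -- RHS
  have hC1sq : HasFDerivAt (fun w => (C1 w) ^ 2)
      ((((2 : ℕ) : ℝ) * C1 z ^ 1) • fderiv ℝ C1 z) z :=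
    hasFDerivAt_pow_comp d1.hasFDerivAt 1
  have hT1 : HasFDerivAt (fun w => 2 * (C1 w) ^ 2 * ((C0 w) ^ 4)⁻¹)
      ((2 * (C1 z) ^ 2) • ((-((C0 z ^ 4) ^ 2)⁻¹) • ((((4 : ℕ) : ℝ) * C0 z ^ 3) • fderiv ℝ C0 z))
        + ((C0 z) ^ 4)⁻¹ • ((2 : ℝ) • (((2 : ℕ) : ℝ) * C1 z ^ 1) • fderiv ℝ C1 z)) z :=
    (hC1sq.const_mul (2 : ℝ)).mul hinv4
  have hT2 : HasFDerivAt (fun w => C2 w * ((C0 w) ^ 3)⁻¹)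
      (C2 z • ((-((C0 z ^ 3) ^ 2)⁻¹) • ((((3 : ℕ) : ℝ) * C0 z ^ 2) • fderiv ℝ C0 z))
        + ((C0 z) ^ 3)⁻¹ • fderiv ℝ C2 z) z :=
    d2.hasFDerivAt.mul hinv3
  have h2c0 : HasFDerivAt (fun w => 2 * (C0 w) ^ 2)
      ((2 : ℝ) • (((2 : ℕ) : ℝ) * C0 z ^ 1) • fderiv ℝ C0 z) z :=
    (hasFDerivAt_pow_comp d0.hasFDerivAt 1).const_mul (2 : ℝ)
  have h2c0nz : 2 * (C0 z) ^ 2 ≠ 0 := by positivity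
  have hT3 : HasFDerivAt (fun w => (2 * (C0 w) ^ 2)⁻¹)
      ((-((2 * C0 z ^ 2) ^ 2)⁻¹) • ((2 : ℝ) • (((2 : ℕ) : ℝ) * C0 z ^ 1) • fderiv ℝ C0 z)) z :=
    hasFDerivAt_inv_comp h2c0 h2c0nz
  have hGfun : (fun w => 2 * (C1 w) ^ 2 / (C0 w) ^ 4 - C2 w / (C0 w) ^ 3 - 1 / (2 * (C0 w) ^ 2))
      = fun w => (2 * (C1 w) ^ 2 * ((C0 w) ^ 4)⁻¹ - C2 w * ((C0 w) ^ 3)⁻¹) - (2 * (C0 w) ^ 2)⁻¹ := by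
    funext w; rw [div_eq_mul_inv, div_eq_mul_inv, one_div]
  have hG : HasFDerivAt
      (fun w => 2 * (C1 w) ^ 2 / (C0 w) ^ 4 - C2 w / (C0 w) ^ 3 - 1 / (2 * (C0 w) ^ 2))
      (((2 * (C1 z) ^ 2) • ((-((C0 z ^ 4) ^ 2)⁻¹) • ((((4 : ℕ) : ℝ) * C0 z ^ 3) • fderiv ℝ C0 z))
        + ((C0 z) ^ 4)⁻¹ • ((2 : ℝ) • (((2 : ℕ) : ℝ) * C1 z ^ 1) • fderiv ℝ C1 z)
        - (C2 z • ((-((C0 z ^ 3) ^ 2)⁻¹) • ((((3 : ℕ) : ℝ) * C0 z ^ 2) • fderiv ℝ C0 z))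
        + ((C0 z) ^ 3)⁻¹ • fderiv ℝ C2 z))
        - (-((2 * C0 z ^ 2) ^ 2)⁻¹) • ((2 : ℝ) • (((2 : ℕ) : ℝ) * C0 z ^ 1) • fderiv ℝ C0 z)) z := by
    rw [hGfun]; exact (hT1.sub hT2).sub hT3
  have rhs_eq : pdx (fun w =>
        2 * (C1 w) ^ 2 / (C0 w) ^ 4 - C2 w / (C0 w) ^ 3 - 1 / (2 * (C0 w) ^ 2)) z
      = (2 * C1 z ^ 2 * (-((C0 z ^ 4) ^ 2)⁻¹ * (4 * C0 z ^ 3 * P))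
          + (C0 z ^ 4)⁻¹ * (2 * (2 * C1 z * Q))
        - (C2 z * (-((C0 z ^ 3) ^ 2)⁻¹ * (3 * C0 z ^ 2 * P)) + (C0 z ^ 3)⁻¹ * R))
        - -((2 * C0 z ^ 2) ^ 2)⁻¹ * (2 * (2 * C0 z * P)) := by
    show fderiv ℝ _ z (1, 0) = _
    rw [hG.fderiv]
    simp only [ContinuousLinearMap.sub_apply, ContinuousLinearMap.add_apply,
      ContinuousLinearMap.smul_apply, smul_eq_mul]
    rw [hx0, hx1, hx2]
    push_cast; ring
  rw [lhs_eq, rhs_eq]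
  field_simp [hc0]
  ring
end
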